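/- arXiv:2108.03837 — 2 statements merged into one kernel-verified Lean document; each statement's English description precedes it below -/
import Mathlib

section
/- In the AMF framework, suppose T ≥ ln d and η = √(ln d / (4TC²)), and suppose at each round t the Learner plays x^t ∈ argmin_{x∈X^t} max_{y∈Y^t} Σ_{j∈[d]} χ^t_j · ℓ^t_j(x, y), where χ^t_j := exp(η·Σ_{s=1}^{t−1} ℓ^s_j(x^s, y^s)) / Σ_{i∈[d]} exp(η·Σ_{s=1}^{t−1} ℓ^s_i(x^s, y^s)). Then against any choices y^t ∈ Y^t of the Adversary (which may depend on x^t and the history), the AMF regret satisfies R^T ≤ 4C·√(T·ln d). -/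
open scoped BigOperators

noncomputable section

/-- Finite-dimensional Euclidean space. -/
abbrev Euc (n : ℕ) := EuclideanSpace ℝ (Fin n)

/-- The Adversary-Moves-First value of an environment `(X, Y, ℓ)`:
`w_A = sup_{y ∈ Y} inf_{x ∈ X} max_{j} ℓ_j(x, y)`. -/
noncomputable def amfValue {N M d : ℕ} (X : Set (Euc N)) (Y : Set (Euc M))
    (ℓ : Euc N → Euc M → Fin d → ℝ) : ℝ :=
  sSup ((fun y => sInf ((fun x => ⨆ j, ℓ x y j) '' X)) '' Y)

/-- The exponential weight on coordinate `j` at round `t`: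
`χ^t_j = exp(η Σ_{s<t} ℓ^s_j(x^s,y^s)) / Σ_i exp(η Σ_{s<t} ℓ^s_i(x^s,y^s))`. -/
noncomputable def chiWeight {T d N M : ℕ} (η : ℝ)
    (ℓ : Fin T → Euc N → Euc M → Fin d → ℝ)
    (x : Fin T → Euc N) (y : Fin T → Euc M) (t : Fin T) (j : Fin d) : ℝ :=
  Real.exp (η * ∑ s ∈ Finset.Iio t, ℓ s (x s) (y s) j) /
    ∑ i : Fin d, Real.exp (η * ∑ s ∈ Finset.Iio t, ℓ s (x s) (y s) i)

/-- The objective of the Learner's stage game at round `t`: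
`ψ^t(x') = max_{y ∈ Y^t} Σ_j χ^t_j · ℓ^t_j(x', y)`. -/
noncomputable def stageObjective {T d N M : ℕ} (η : ℝ)
    (Y : Fin T → Set (Euc M)) (ℓ : Fin T → Euc N → Euc M → Fin d → ℝ)
    (x : Fin T → Euc N) (y : Fin T → Euc M) (t : Fin T) (x' : Euc N) : ℝ :=
  sSup ((fun yy => ∑ j : Fin d, chiWeight η ℓ x y t j * ℓ t x' yy j) '' Y t)



set_option maxHeartbeats 1600000
set_option linter.unusedSectionVars false

section Sion

variable {E F' : Type*} [NormedAddCommGroup E] [NormedSpace ℝ E]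
  [NormedAddCommGroup F'] [NormedSpace ℝ F']

lemma sublevel_isCompact {X : Set E} (hX : IsCompact X) {g : E → ℝ}
    (hg : ContinuousOn g X) (r : ℝ) : IsCompact {x ∈ X | g x ≤ r} := by
  have heq : {x ∈ X | g x ≤ r} = X ∩ g ⁻¹' (Set.Iic r) := rfl
  have h := hg.preimage_isClosed_of_isClosed hX.isClosed (isClosed_Iic (a := r))
  exact hX.of_isClosed_subset (heq ▸ h) (fun x hx => hx.1)

lemma preconn_split {α : Type*} [TopologicalSpace α] {s u v : Set α} (hs : IsPreconnected s)
    (hu : IsClosed u) (hv : IsClosed v) (huv : u ∩ v = ∅) (hsub : s ⊆ u ∪ v) :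
    s ⊆ u ∨ s ⊆ v := by
  rcases (s ∩ u).eq_empty_or_nonempty with h | h
  · right; intro z hz
    rcases hsub hz with h' | h'
    · exact absurd (Set.mem_inter hz h') (by simp [h])
    · exact h'
  rcases (s ∩ v).eq_empty_or_nonempty with h2 | h2
  · left; intro z hz
    rcases hsub hz with h' | h'
    · exact h'
    · exact absurd (Set.mem_inter hz h') (by simp [h2])
  · obtain ⟨z, hz⟩ := isPreconnected_closed_iff.1 hs u v hu hv hsub h h2
    exact absurd (huv ▸ hz.2) (Set.notMem_empty z)

lemma sion_pair {X : Set E} {Y : Set F'} (hYc : Convex ℝ Y)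
    {f : E → F' → ℝ}
    (hfy : ∀ x ∈ X, ContinuousOn (f x) Y)
    (hmin : ∀ x ∈ X, ∀ y1 ∈ Y, ∀ y2 ∈ Y, ∀ a b : ℝ, 0 ≤ a → 0 ≤ b → a + b = 1 →
      min (f x y1) (f x y2) ≤ f x (a • y1 + b • y2))
    {X' : Set E} (hX'c : IsCompact X') (hX'sub : X' ⊆ X)
    (hfx' : ∀ y ∈ Y, ContinuousOn (fun x => f x y) X')
    (hqc : ∀ y ∈ Y, ∀ r : ℝ, Convex ℝ {x ∈ X' | f x y ≤ r})
    {y1 y2 : F'} (hy1 : y1 ∈ Y) (hy2 : y2 ∈ Y)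
    {c c' : ℝ} (hcc : c < c')
    (hbig : ∀ x ∈ X', c' < max (f x y1) (f x y2)) :
    ∃ y ∈ Y, ∀ x ∈ X', c < f x y := by
  by_contra hcon
  push_neg at hcon
  -- hcon : ∀ y ∈ Y, ∃ x ∈ X', f x y ≤ c
  set γ : ℝ → F' := fun z => (1 - z) • y1 + z • y2 with hγ
  have hγY : ∀ z ∈ Set.Icc (0:ℝ) 1, γ z ∈ Y := by
    intro z hz
    exact hYc hy1 hy2 (by linarith [hz.2]) hz.1 (by ring)
  have hγcont : Continuous γ := by continuity
  set C0 : Set E := {x ∈ X' | f x y1 ≤ c'} with hC0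
  set C1 : Set E := {x ∈ X' | f x y2 ≤ c'} with hC1
  have hC0cl : IsClosed C0 := (sublevel_isCompact hX'c (hfx' y1 hy1) c').isClosed
  have hC1cl : IsClosed C1 := (sublevel_isCompact hX'c (hfx' y2 hy2) c').isClosed
  have hdisj : C0 ∩ C1 = ∅ := by
    ext z
    simp only [Set.mem_inter_iff, Set.mem_setOf_eq, Set.mem_empty_iff_false, iff_false]
    rintro ⟨⟨hzX, h1⟩, ⟨-, h2⟩⟩
    exact absurd (max_le h1 h2) (not_le.2 (hbig z hzX))
  set B : ℝ → Set E := fun z => {x ∈ X' | f x (γ z) ≤ c'} with hB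
  have hBsub : ∀ z ∈ Set.Icc (0:ℝ) 1, B z ⊆ C0 ∪ C1 := by
    intro z hz xx hxx
    have hm : min (f xx y1) (f xx y2) ≤ f xx (γ z) :=
      hmin xx (hX'sub hxx.1) y1 hy1 y2 hy2 (1 - z) z (by linarith [hz.2]) hz.1 (by ring)
    rcases min_le_iff.1 (le_trans hm hxx.2) with h | h
    · exact Or.inl ⟨hxx.1, h⟩
    · exact Or.inr ⟨hxx.1, h⟩
  have hBne : ∀ z ∈ Set.Icc (0:ℝ) 1, ∃ xx, xx ∈ X' ∧ f xx (γ z) ≤ c := by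
    intro z hz
    obtain ⟨xx, h1, h2⟩ := hcon (γ z) (hγY z hz)
    exact ⟨xx, h1, h2⟩
  have hsplit : ∀ z ∈ Set.Icc (0:ℝ) 1, B z ⊆ C0 ∨ B z ⊆ C1 := by
    intro z hz
    exact preconn_split (hqc (γ z) (hγY z hz) c').isPreconnected hC0cl hC1cl hdisj (hBsub z hz)
  -- closedness of the two index sets
  have key : ∀ U W : Set E, (U ∩ W = ∅) → (∀ z ∈ Set.Icc (0:ℝ) 1, B z ⊆ U ∨ B z ⊆ W) →
      IsClosed {z ∈ Set.Icc (0:ℝ) 1 | B z ⊆ U} := by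
    intro U W hUW hUV
    apply isClosed_of_closure_subset
    intro z hz
    have hzIcc : z ∈ Set.Icc (0:ℝ) 1 :=
      closure_minimal (fun w hw => hw.1) isClosed_Icc hz
    obtain ⟨xx, hxX', hxc⟩ := hBne z hzIcc
    have hg : ContinuousOn (fun w => f xx (γ w)) (Set.Icc (0:ℝ) 1) :=
      (hfy xx (hX'sub hxX')).comp hγcont.continuousOn hγY
    have hev : ∀ᶠ w in nhdsWithin z (Set.Icc (0:ℝ) 1), f xx (γ w) < c' :=
      (hg z hzIcc) (Iio_mem_nhds (lt_of_le_of_lt hxc hcc))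
    have hne : (nhdsWithin z {w ∈ Set.Icc (0:ℝ) 1 | B w ⊆ U}).NeBot :=
      mem_closure_iff_nhdsWithin_neBot.1 hz
    have hev' : ∀ᶠ w in nhdsWithin z {w ∈ Set.Icc (0:ℝ) 1 | B w ⊆ U}, f xx (γ w) < c' :=
      hev.filter_mono (nhdsWithin_mono z (fun w hw => hw.1))
    have hev'' : ∀ᶠ w in nhdsWithin z {w ∈ Set.Icc (0:ℝ) 1 | B w ⊆ U},
        w ∈ {w ∈ Set.Icc (0:ℝ) 1 | B w ⊆ U} := eventually_mem_nhdsWithin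
    obtain ⟨w, hwI, hwlt⟩ := (hev''.and hev').exists
    have hxU : xx ∈ U := hwI.2 ⟨hxX', hwlt.le⟩
    refine ⟨hzIcc, ?_⟩
    rcases hUV z hzIcc with h | h
    · exact h
    · have hxBz : xx ∈ B z := ⟨hxX', le_trans hxc hcc.le⟩
      exact absurd (hUW ▸ (Set.mem_inter hxU (h hxBz))) (Set.notMem_empty xx)
  have hIcl : IsClosed {z ∈ Set.Icc (0:ℝ) 1 | B z ⊆ C0} := key C0 C1 hdisj hsplit
  have hJcl : IsClosed {z ∈ Set.Icc (0:ℝ) 1 | B z ⊆ C1} :=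
    key C1 C0 (by rw [Set.inter_comm]; exact hdisj) (fun z hz => (hsplit z hz).symm)
  have hIJdisj : {z ∈ Set.Icc (0:ℝ) 1 | B z ⊆ C0} ∩ {z ∈ Set.Icc (0:ℝ) 1 | B z ⊆ C1} = ∅ := by
    ext z
    simp only [Set.mem_inter_iff, Set.mem_setOf_eq, Set.mem_empty_iff_false, iff_false]
    rintro ⟨⟨hz1, h1⟩, ⟨-, h2⟩⟩
    obtain ⟨xx, hxX', hxc⟩ := hBne z hz1
    have : xx ∈ B z := ⟨hxX', le_trans hxc hcc.le⟩
    exact absurd (hdisj ▸ Set.mem_inter (h1 this) (h2 this)) (Set.notMem_empty xx)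
  have hIcover : Set.Icc (0:ℝ) 1 ⊆
      {z ∈ Set.Icc (0:ℝ) 1 | B z ⊆ C0} ∪ {z ∈ Set.Icc (0:ℝ) 1 | B z ⊆ C1} := by
    intro z hz
    rcases hsplit z hz with h | h
    · exact Or.inl ⟨hz, h⟩
    · exact Or.inr ⟨hz, h⟩
  have h0I : (0:ℝ) ∈ {z ∈ Set.Icc (0:ℝ) 1 | B z ⊆ C0} := by
    refine ⟨by norm_num, ?_⟩
    intro xx hxx
    have : γ 0 = y1 := by simp [hγ]
    exact ⟨hxx.1, by rw [← this]; exact hxx.2⟩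
  have h1J : (1:ℝ) ∈ {z ∈ Set.Icc (0:ℝ) 1 | B z ⊆ C1} := by
    refine ⟨by norm_num, ?_⟩
    intro xx hxx
    have : γ 1 = y2 := by simp [hγ]
    exact ⟨hxx.1, by rw [← this]; exact hxx.2⟩
  rcases preconn_split isPreconnected_Icc hIcl hJcl hIJdisj hIcover with h | h
  · have h1I := h (by norm_num : (1:ℝ) ∈ Set.Icc (0:ℝ) 1)
    exact absurd (hIJdisj ▸ Set.mem_inter h1I h1J) (Set.notMem_empty (1:ℝ))
  · have h0J := h (by norm_num : (0:ℝ) ∈ Set.Icc (0:ℝ) 1)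
    exact absurd (hIJdisj ▸ Set.mem_inter h0I h0J) (Set.notMem_empty (0:ℝ))



lemma sion_finset [DecidableEq F'] {X : Set E} {Y : Set F'} (hYc : Convex ℝ Y) (hYne : Y.Nonempty)
    {f : E → F' → ℝ}
    (hfx : ∀ y ∈ Y, ContinuousOn (fun x => f x y) X)
    (hfy : ∀ x ∈ X, ContinuousOn (f x) Y)
    (hmin : ∀ x ∈ X, ∀ y1 ∈ Y, ∀ y2 ∈ Y, ∀ a b : ℝ, 0 ≤ a → 0 ≤ b → a + b = 1 →
      min (f x y1) (f x y2) ≤ f x (a • y1 + b • y2)) :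
    ∀ (s : Finset F'), (↑s ⊆ Y) → ∀ (X' : Set E), IsCompact X' → X' ⊆ X →
      (∀ y ∈ Y, ∀ r : ℝ, Convex ℝ {x ∈ X' | f x y ≤ r}) →
      ∀ c c' : ℝ, c < c' → (∀ x ∈ X', ∃ yi ∈ s, c' < f x yi) →
      ∃ y ∈ Y, ∀ x ∈ X', c < f x y := by
  intro s
  induction s using Finset.induction_on with
  | empty =>
    intro _ X' _ _ _ c c' _ hbig
    obtain ⟨y0, hy0⟩ := hYne
    exact ⟨y0, hy0, fun xx hx => absurd (hbig xx hx) (by simp)⟩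
  | insert a s ha ih =>
    intro hsY X' hX'c hX'sub hqc c c' hcc hbig
    set cm := (c + c') / 2 with hcm
    have hccm : c < cm := by rw [hcm]; linarith
    have hcmc' : cm < c' := by rw [hcm]; linarith
    have haY : a ∈ Y := hsY (by simp)
    have hs'Y : ↑s ⊆ Y := fun z hz => hsY (by simp [hz])
    set X'' : Set E := {xx ∈ X' | f xx a ≤ cm} with hX''
    have hX''c : IsCompact X'' := sublevel_isCompact hX'c ((hfx a haY).mono hX'sub) cm
    have hX''sub : X'' ⊆ X := fun xx hx => hX'sub hx.1
    have hqc'' : ∀ y ∈ Y, ∀ r : ℝ, Convex ℝ {xx ∈ X'' | f xx y ≤ r} := by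
      intro y hy r
      have heq : {xx ∈ X'' | f xx y ≤ r} =
          {xx ∈ X' | f xx y ≤ r} ∩ {xx ∈ X' | f xx a ≤ cm} := by
        ext z
        constructor
        · rintro ⟨⟨h1, h2⟩, h3⟩; exact ⟨⟨h1, h3⟩, ⟨h1, h2⟩⟩
        · rintro ⟨⟨h1, h3⟩, ⟨-, h2⟩⟩; exact ⟨⟨h1, h2⟩, h3⟩
      rw [heq]
      exact (hqc y hy r).inter (hqc a haY cm)
    have hbig'' : ∀ xx ∈ X'', ∃ yi ∈ s, c' < f xx yi := by
      intro xx hx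
      obtain ⟨yi, hyi, hlt⟩ := hbig xx hx.1
      rcases Finset.mem_insert.1 hyi with rfl | hyi'
      · have := hx.2; linarith
      · exact ⟨yi, hyi', hlt⟩
    obtain ⟨y0, hy0Y, hy0⟩ := ih hs'Y X'' hX''c hX''sub hqc'' cm c' hcmc' hbig''
    have hpair : ∀ xx ∈ X', cm < max (f xx y0) (f xx a) := by
      intro xx hx
      by_cases hxm : f xx a ≤ cm
      · exact lt_max_iff.2 (Or.inl (hy0 xx ⟨hx, hxm⟩))
      · exact lt_max_iff.2 (Or.inr (not_le.1 hxm))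
    exact sion_pair hYc hfy hmin hX'c hX'sub
      (fun y hy => (hfx y hy).mono hX'sub) hqc hy0Y haY hccm hpair

lemma sion_exists {X : Set E} {Y : Set F'} (hXc : IsCompact X) (hXne : X.Nonempty)
    (hYc : Convex ℝ Y) (hYne : Y.Nonempty)
    {f : E → F' → ℝ}
    (hfx : ∀ y ∈ Y, ContinuousOn (fun x => f x y) X)
    (hfy : ∀ x ∈ X, ContinuousOn (f x) Y)
    (hqc : ∀ y ∈ Y, ∀ r : ℝ, Convex ℝ {x ∈ X | f x y ≤ r})
    (hmin : ∀ x ∈ X, ∀ y1 ∈ Y, ∀ y2 ∈ Y, ∀ a b : ℝ, 0 ≤ a → 0 ≤ b → a + b = 1 →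
      min (f x y1) (f x y2) ≤ f x (a • y1 + b • y2))
    {v : ℝ} (hv : ∀ y ∈ Y, ∀ c, v < c → ∃ x ∈ X, f x y < c) :
    ∃ x0 ∈ X, ∀ y ∈ Y, f x0 y ≤ v := by
  classical
  by_contra hcon
  push_neg at hcon
  choose! yf hyfY hyfv using hcon
  have hnb : ∀ xx ∈ X, ∃ W : Set E, IsOpen W ∧ xx ∈ W ∧
      ∀ x' ∈ W ∩ X, (v + f xx (yf xx)) / 2 < f x' (yf xx) := by
    intro xx hx
    have hcw : ContinuousWithinAt (fun x' => f x' (yf xx)) X xx :=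
      (hfx (yf xx) (hyfY xx hx)) xx hx
    have hmem : (fun x' => f x' (yf xx)) ⁻¹' Set.Ioi ((v + f xx (yf xx)) / 2) ∈
        nhdsWithin xx X := hcw (Ioi_mem_nhds (by linarith [hyfv xx hx]))
    obtain ⟨W, hWo, hxW, hW⟩ := mem_nhdsWithin.1 hmem
    exact ⟨W, hWo, hxW, fun x' hx' => hW hx'⟩
  choose! W hWo hxW hWf using hnb
  obtain ⟨t, htX, hcover⟩ := hXc.elim_nhds_subcover W
    (fun xx hx => (hWo xx hx).mem_nhds (hxW xx hx))
  have htne : t.Nonempty := by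
    obtain ⟨x0, hx0⟩ := hXne
    obtain ⟨xi, hxi, -⟩ := Set.mem_iUnion₂.1 (hcover hx0)
    exact ⟨xi, hxi⟩
  set c' : ℝ := t.inf' htne (fun xx => (v + f xx (yf xx)) / 2) with hc'
  have hvc' : v < c' := by
    rw [hc', Finset.lt_inf'_iff]
    intro b hb
    linarith [hyfv b (htX b hb)]
  have hbig : ∀ xx ∈ X, ∃ yi ∈ t.image yf, c' < f xx yi := by
    intro xx hx
    obtain ⟨xi, hxi, hxWi⟩ := Set.mem_iUnion₂.1 (hcover hx)
    refine ⟨yf xi, Finset.mem_image_of_mem yf hxi, ?_⟩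
    exact lt_of_le_of_lt (Finset.inf'_le _ hxi) (hWf xi (htX xi hxi) xx ⟨hxWi, hx⟩)
  have himY : ↑(t.image yf) ⊆ Y := by
    intro z hz
    obtain ⟨xi, hxi, rfl⟩ := Finset.mem_image.1 (Finset.mem_coe.1 hz)
    exact hyfY xi (htX xi hxi)
  obtain ⟨ys, hysY, hys⟩ := sion_finset hYc hYne hfx hfy hmin (t.image yf) himY X hXc
    subset_rfl hqc ((v + c') / 2) c' (by linarith) hbig
  obtain ⟨xx, hxx, hlt⟩ := hv ys hysY ((v + c') / 2) (by linarith)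
  exact absurd (hys xx hxx) (not_lt.2 hlt.le)

end Sion

lemma exp_le_quad {z : ℝ} (hz : |z| ≤ 1) : Real.exp z ≤ 1 + z + z^2 := by
  have h := Real.exp_bound hz (by norm_num : 0 < 2)
  simp only [Finset.sum_range_succ, Finset.sum_range_zero, Nat.factorial] at h
  norm_num at h
  have h2 := (abs_le.1 h).2
  nlinarith [sq_abs z, sq_nonneg z]

lemma round_key (T d N M : ℕ) (hd : 1 ≤ d) (C : ℝ) (hC : 0 < C)
    (X : Fin T → Set (Euc N)) (Y : Fin T → Set (Euc M))
    (ℓ : Fin T → Euc N → Euc M → Fin d → ℝ)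
    (hXconv : ∀ t, Convex ℝ (X t)) (hXcomp : ∀ t, IsCompact (X t))
    (hXne : ∀ t, (X t).Nonempty)
    (hYconv : ∀ t, Convex ℝ (Y t)) (hYne : ∀ t, (Y t).Nonempty)
    (hcont : ∀ t j, ContinuousOn (fun p : Euc N × Euc M => ℓ t p.1 p.2 j) (X t ×ˢ Y t))
    (hbdd : ∀ t j, ∀ x ∈ X t, ∀ y ∈ Y t, |ℓ t x y j| ≤ C)
    (hconv : ∀ t j, ∀ y ∈ Y t, ConvexOn ℝ (X t) (fun x => ℓ t x y j))
    (hconc : ∀ t j, ∀ x ∈ X t, ConcaveOn ℝ (Y t) (fun y => ℓ t x y j))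
    (η : ℝ)
    (x : Fin T → Euc N) (y : Fin T → Euc M)
    (hx : ∀ t, x t ∈ X t) (hy : ∀ t, y t ∈ Y t)
    (hopt : ∀ t : Fin T, ∀ x' ∈ X t,
      stageObjective η Y ℓ x y t (x t) ≤ stageObjective η Y ℓ x y t x')
    (t : Fin T) :
    ∑ j : Fin d, chiWeight η ℓ x y t j * ℓ t (x t) (y t) j
      ≤ amfValue (X t) (Y t) (ℓ t) := by
  haveI : Nonempty (Fin d) := ⟨⟨0, hd⟩⟩
  set χ : Fin d → ℝ := chiWeight η ℓ x y t with hχ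
  have hden : 0 < ∑ i : Fin d, Real.exp (η * ∑ s ∈ Finset.Iio t, ℓ s (x s) (y s) i) :=
    Finset.sum_pos (fun i _ => Real.exp_pos _) Finset.univ_nonempty
  have hχpos : ∀ j, 0 < χ j := fun j => div_pos (Real.exp_pos _) hden
  have hχsum : (∑ j : Fin d, χ j) = 1 := by
    rw [hχ]
    simp only [chiWeight]
    rw [← Finset.sum_div, div_self (ne_of_gt hden)]
  set G : Euc N → Euc M → ℝ := fun x' y' => ∑ j : Fin d, χ j * ℓ t x' y' j with hG
  have hbddA : ∀ x' y', ∀ j, ℓ t x' y' j ≤ ⨆ j', ℓ t x' y' j' := by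
    intro x' y' j
    exact le_ciSup (Set.Finite.bddAbove (Set.finite_range _)) j
  have hGle : ∀ x' y', G x' y' ≤ ⨆ j', ℓ t x' y' j' := by
    intro x' y'
    calc G x' y' ≤ ∑ j : Fin d, χ j * (⨆ j', ℓ t x' y' j') :=
          Finset.sum_le_sum (fun j _ =>
            mul_le_mul_of_nonneg_left (hbddA x' y' j) (hχpos j).le)
      _ = ⨆ j', ℓ t x' y' j' := by rw [← Finset.sum_mul, hχsum, one_mul]
  have hsupbdd : ∀ x' ∈ X t, ∀ y' ∈ Y t, (⨆ j', ℓ t x' y' j') ≤ C := by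
    intro x' hx' y' hy'
    exact ciSup_le (fun j => (abs_le.1 (hbdd t j x' hx' y' hy')).2)
  have hsuplb : ∀ x' ∈ X t, ∀ y' ∈ Y t, -C ≤ ⨆ j', ℓ t x' y' j' := by
    intro x' hx' y' hy'
    exact le_trans (abs_le.1 (hbdd t ⟨0, hd⟩ x' hx' y' hy')).1 (hbddA x' y' ⟨0, hd⟩)
  have hℓcx : ∀ j, ∀ y' ∈ Y t, ContinuousOn (fun x' => ℓ t x' y' j) (X t) := by
    intro j y' hy'
    exact (hcont t j).comp (Continuous.continuousOn (by continuity))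
      (fun x' hx' => Set.mk_mem_prod hx' hy')
  have hℓcy : ∀ j, ∀ x' ∈ X t, ContinuousOn (fun y' => ℓ t x' y' j) (Y t) := by
    intro j x' hx'
    exact (hcont t j).comp (Continuous.continuousOn (by continuity))
      (fun y' hy' => Set.mk_mem_prod hx' hy')
  have hGcx : ∀ y' ∈ Y t, ContinuousOn (fun x' => G x' y') (X t) := by
    intro y' hy'
    exact continuousOn_finset_sum _ (fun j _ => continuousOn_const.mul (hℓcx j y' hy'))
  have hGcy : ∀ x' ∈ X t, ContinuousOn (G x') (Y t) := by
    intro x' hx'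
    exact continuousOn_finset_sum _ (fun j _ => continuousOn_const.mul (hℓcy j x' hx'))
  have hGconv : ∀ y' ∈ Y t, ∀ r : ℝ, Convex ℝ {x' ∈ X t | G x' y' ≤ r} := by
    intro y' hy' r
    have hcvx : ConvexOn ℝ (X t) (fun x' => G x' y') := by
      refine ⟨hXconv t, ?_⟩
      intro x1 h1 x2 h2 a b ha hb hab
      have hsum : ∀ j, ℓ t (a • x1 + b • x2) y' j ≤ a * ℓ t x1 y' j + b * ℓ t x2 y' j :=
        fun j => (hconv t j y' hy').2 h1 h2 ha hb hab
      calc G (a • x1 + b • x2) y'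
          ≤ ∑ j : Fin d, χ j * (a * ℓ t x1 y' j + b * ℓ t x2 y' j) :=
            Finset.sum_le_sum (fun j _ => mul_le_mul_of_nonneg_left (hsum j) (hχpos j).le)
        _ = a • G x1 y' + b • G x2 y' := by
            simp only [hG, smul_eq_mul, Finset.mul_sum, ← Finset.sum_add_distrib]
            exact Finset.sum_congr rfl (fun j _ => by ring)
    exact hcvx.convex_le r
  have hGmin : ∀ x' ∈ X t, ∀ y1 ∈ Y t, ∀ y2 ∈ Y t, ∀ a b : ℝ, 0 ≤ a → 0 ≤ b → a + b = 1 →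
      min (G x' y1) (G x' y2) ≤ G x' (a • y1 + b • y2) := by
    intro x' hx' y1 hy1 y2 hy2 a b ha hb hab
    have hcomb : a * G x' y1 + b * G x' y2 ≤ G x' (a • y1 + b • y2) := by
      have hsum : ∀ j, a * ℓ t x' y1 j + b * ℓ t x' y2 j ≤ ℓ t x' (a • y1 + b • y2) j :=
        fun j => (hconc t j x' hx').2 hy1 hy2 ha hb hab
      calc a * G x' y1 + b * G x' y2
          = ∑ j : Fin d, χ j * (a * ℓ t x' y1 j + b * ℓ t x' y2 j) := by
            simp only [hG, Finset.mul_sum, ← Finset.sum_add_distrib]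
            exact Finset.sum_congr rfl (fun j _ => by ring)
        _ ≤ G x' (a • y1 + b • y2) :=
            Finset.sum_le_sum (fun j _ => mul_le_mul_of_nonneg_left (hsum j) (hχpos j).le)
    have h1 : min (G x' y1) (G x' y2) ≤ G x' y1 := min_le_left _ _
    have h2 : min (G x' y1) (G x' y2) ≤ G x' y2 := min_le_right _ _
    have hmm : min (G x' y1) (G x' y2) = a * min (G x' y1) (G x' y2) + b * min (G x' y1) (G x' y2) := by
      rw [← add_mul, hab, one_mul]
    linarith [mul_le_mul_of_nonneg_left h1 ha, mul_le_mul_of_nonneg_left h2 hb]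
  have hv : ∀ y' ∈ Y t, ∀ c : ℝ, amfValue (X t) (Y t) (ℓ t) < c → ∃ x' ∈ X t, G x' y' < c := by
    intro y' hy' c hc
    have himgne : ((fun x' => ⨆ j', ℓ t x' y' j') '' X t).Nonempty := (hXne t).image _
    have hinfle : sInf ((fun x' => ⨆ j', ℓ t x' y' j') '' X t)
        ≤ amfValue (X t) (Y t) (ℓ t) := by
      apply le_csSup
      · refine ⟨C, ?_⟩
        rintro z ⟨y'', hy'', rfl⟩
        obtain ⟨x0, hx0⟩ := hXne t
        refine csInf_le_of_le ⟨-C, ?_⟩ (Set.mem_image_of_mem _ hx0) (hsupbdd x0 hx0 y'' hy'')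
        rintro w ⟨x', hx', rfl⟩
        exact hsuplb x' hx' y'' hy''
      · exact Set.mem_image_of_mem _ hy'
    obtain ⟨z, ⟨x', hx', rfl⟩, hz⟩ := exists_lt_of_csInf_lt himgne (lt_of_le_of_lt hinfle hc)
    exact ⟨x', hx', lt_of_le_of_lt (hGle x' y') hz⟩
  obtain ⟨x0, hx0X, hx0⟩ := sion_exists (hXcomp t) (hXne t) (hYconv t) (hYne t)
    hGcx hGcy hGconv hGmin hv
  have hbddG : ∀ x' ∈ X t, ∀ y' ∈ Y t, G x' y' ≤ C := fun x' hx' y' hy' =>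
    le_trans (hGle x' y') (hsupbdd x' hx' y' hy')
  have hstage : ∀ x', stageObjective η Y ℓ x y t x' = sSup ((fun yy => G x' yy) '' Y t) := by
    intro x'
    simp only [stageObjective, hG, ← hχ]
  have h1 : G (x t) (y t) ≤ stageObjective η Y ℓ x y t (x t) := by
    rw [hstage]
    apply le_csSup
    · refine ⟨C, ?_⟩
      rintro z ⟨yy, hyy, rfl⟩
      exact hbddG (x t) (hx t) yy hyy
    · exact Set.mem_image_of_mem _ (hy t)
  have h2 := hopt t x0 hx0X
  have h3 : stageObjective η Y ℓ x y t x0 ≤ amfValue (X t) (Y t) (ℓ t) := by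
    rw [hstage]
    apply csSup_le ((hYne t).image _)
    rintro z ⟨yy, hyy, rfl⟩
    exact hx0 yy hyy
  show G (x t) (y t) ≤ amfValue (X t) (Y t) (ℓ t)
  linarith

/-- **Theorem 2.6 / AMF regret guarantee of the general algorithm.**
If `T ≥ ln d`, `η = √(ln d/(4TC²))`, and at each round the Learner plays a minimizer of
`ψ^t` over `X^t`, then against any Adversary the AMF regret satisfies
`R^T ≤ 4C√(T ln d)`. -/
theorem amf_algorithm_regret_bound
    (T d N M : ℕ) (hd : 1 ≤ d) (C : ℝ) (hC : 0 < C)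
    (X : Fin T → Set (Euc N)) (Y : Fin T → Set (Euc M))
    (ℓ : Fin T → Euc N → Euc M → Fin d → ℝ)
    (hXconv : ∀ t, Convex ℝ (X t)) (hXcomp : ∀ t, IsCompact (X t))
    (hXne : ∀ t, (X t).Nonempty)
    (hYconv : ∀ t, Convex ℝ (Y t)) (hYcomp : ∀ t, IsCompact (Y t))
    (hYne : ∀ t, (Y t).Nonempty)
    (hcont : ∀ t j, ContinuousOn (fun p : Euc N × Euc M => ℓ t p.1 p.2 j) (X t ×ˢ Y t))
    (hbdd : ∀ t j, ∀ x ∈ X t, ∀ y ∈ Y t, |ℓ t x y j| ≤ C)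
    (hconv : ∀ t j, ∀ y ∈ Y t, ConvexOn ℝ (X t) (fun x => ℓ t x y j))
    (hconc : ∀ t j, ∀ x ∈ X t, ConcaveOn ℝ (Y t) (fun y => ℓ t x y j))
    (hT : Real.log d ≤ T)
    (η : ℝ) (hη : η = Real.sqrt (Real.log d / (4 * T * C ^ 2)))
    (x : Fin T → Euc N) (y : Fin T → Euc M)
    (hx : ∀ t, x t ∈ X t) (hy : ∀ t, y t ∈ Y t)
    -- the Learner plays minimax-optimally at every round:
    (hmin : ∀ t : Fin T, ∀ x' ∈ X t,
      stageObjective η Y ℓ x y t (x t) ≤ stageObjective η Y ℓ x y t x') :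
    (⨆ j : Fin d, ((∑ t, ℓ t (x t) (y t) j) - ∑ t, amfValue (X t) (Y t) (ℓ t))) ≤
      4 * C * Real.sqrt (T * Real.log d) := by
  haveI hnefd : Nonempty (Fin d) := ⟨⟨0, hd⟩⟩
  set w : Fin T → ℝ := fun t => amfValue (X t) (Y t) (ℓ t) with hw
  have hround : ∀ t : Fin T,
      ∑ j : Fin d, chiWeight η ℓ x y t j * ℓ t (x t) (y t) j ≤ w t :=
    fun t => round_key T d N M hd C hC X Y ℓ hXconv hXcomp hXne hYconv hYne hcont hbdd
      hconv hconc η x y hx hy hmin t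
  rcases eq_or_lt_of_le hd with hd1 | hd2
  -- case d = 1
  · subst hd1
    have hRHS : (0:ℝ) ≤ 4 * C * Real.sqrt (T * Real.log 1) := by positivity
    have hgoal : ∀ j : Fin 1,
        (∑ t, ℓ t (x t) (y t) j) - ∑ t, amfValue (X t) (Y t) (ℓ t) ≤ 0 := by
      intro j
      have hj : j = 0 := Fin.eq_zero j
      subst hj
      have hper : ∀ t : Fin T, ℓ t (x t) (y t) 0 ≤ w t := by
        intro t
        have h := hround t
        rw [Fin.sum_univ_one] at h
        have hχ1 : chiWeight η ℓ x y t 0 = 1 := by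
          simp only [chiWeight]
          rw [Fin.sum_univ_one, div_self (Real.exp_pos _).ne']
        rwa [hχ1, one_mul] at h
      have hsum := Finset.sum_le_sum (fun t (_ : t ∈ Finset.univ) => hper t)
      simpa using sub_nonpos.2 hsum
    refine le_trans (ciSup_le hgoal) ?_
    simpa using hRHS
  -- case 2 ≤ d
  have hdR : (1:ℝ) < d := by exact_mod_cast hd2
  have ha : 0 < Real.log d := Real.log_pos hdR
  have hTR : (0:ℝ) < T := lt_of_lt_of_le ha hT
  have hTpos : 0 < T := by exact_mod_cast hTR
  have hη2 : η^2 = Real.log d / (4 * T * C^2) := by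
    rw [hη]; exact Real.sq_sqrt (by positivity)
  have hηpos : 0 < η := by
    rw [hη]; exact Real.sqrt_pos.2 (by positivity)
  have hηC2 : η^2 * C^2 ≤ 1/4 := by
    rw [hη2]
    rw [div_mul_eq_mul_div, div_le_iff₀ (by positivity)]
    nlinarith [hT, hC]
  have hηC : η * C ≤ 1/2 := by
    nlinarith [mul_pos hηpos hC]
  -- potential function setup
  set Fs : ℕ → Finset (Fin T) := fun n => Finset.univ.filter (fun s : Fin T => (s:ℕ) < n)
    with hFs
  set L : ℕ → Fin d → ℝ := fun n j => ∑ s ∈ Fs n, ℓ s (x s) (y s) j with hL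
  set Φ : ℕ → ℝ := fun n => ∑ j : Fin d, Real.exp (η * L n j) with hΦ
  set Wp : ℕ → ℝ := fun n => ∑ s ∈ Fs n, w s with hWp
  have hFsIio : ∀ t : Fin T, Finset.Iio t = Fs (t:ℕ) := by
    intro t; ext s
    simp only [Finset.mem_Iio, hFs, Finset.mem_filter, Finset.mem_univ, true_and]
    exact Fin.lt_def
  have hFsucc : ∀ n, n < T → ∀ hn : n < T, Fs (n+1) = insert ⟨n, hn⟩ (Fs n) := by
    intro n _ hn
    ext s
    simp only [hFs, Finset.mem_filter, Finset.mem_univ, true_and, Finset.mem_insert,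
      Fin.ext_iff]
    rw [Nat.lt_succ_iff_lt_or_eq]
    tauto
  have hnotmem : ∀ n (hn : n < T), (⟨n, hn⟩ : Fin T) ∉ Fs n := by
    intro n hn
    simp [hFs]
  have hFfull : Fs T = Finset.univ := by
    ext s; simp [hFs, s.isLt]
  have hΦpos : ∀ n, 0 < Φ n :=
    fun n => Finset.sum_pos (fun j _ => Real.exp_pos _) Finset.univ_nonempty
  have hchij : ∀ n (hn : n < T) (j : Fin d),
      chiWeight η ℓ x y ⟨n, hn⟩ j = Real.exp (η * L n j) / Φ n := by
    intro n hn j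
    simp only [chiWeight, hΦ]
    rw [hFsIio ⟨n, hn⟩]
  have hstep : ∀ n (hn : n < T),
      Φ (n+1) ≤ Φ n * Real.exp (η * w ⟨n, hn⟩ + η^2 * C^2) := by
    intro n hn
    have hLsucc : ∀ j, L (n+1) j = L n j + ℓ ⟨n, hn⟩ (x ⟨n, hn⟩) (y ⟨n, hn⟩) j := by
      intro j
      simp only [hL]
      rw [hFsucc n hn hn, Finset.sum_insert (hnotmem n hn)]
      ring
    have hterm : ∀ j, Real.exp (η * L (n+1) j) ≤
        Real.exp (η * L n j) * (1 + η * ℓ ⟨n, hn⟩ (x ⟨n, hn⟩) (y ⟨n, hn⟩) j + η^2 * C^2) := by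
      intro j
      rw [hLsucc j, mul_add, Real.exp_add]
      apply mul_le_mul_of_nonneg_left _ (Real.exp_pos _).le
      have hb := hbdd ⟨n, hn⟩ j _ (hx ⟨n, hn⟩) _ (hy ⟨n, hn⟩)
      have habs : |η * ℓ ⟨n, hn⟩ (x ⟨n, hn⟩) (y ⟨n, hn⟩) j| ≤ 1 := by
        rw [abs_mul, abs_of_pos hηpos]
        nlinarith
      have hq := exp_le_quad habs
      have h2 : (η * ℓ ⟨n, hn⟩ (x ⟨n, hn⟩) (y ⟨n, hn⟩) j)^2 ≤ η^2 * C^2 := by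
        rw [mul_pow]
        apply mul_le_mul_of_nonneg_left _ (sq_nonneg η)
        rw [← sq_abs]
        exact pow_le_pow_left₀ (abs_nonneg _) hb 2
      linarith
    have hkey : ∑ j : Fin d, Real.exp (η * L n j) * ℓ ⟨n, hn⟩ (x ⟨n, hn⟩) (y ⟨n, hn⟩) j =
        Φ n * ∑ j : Fin d, chiWeight η ℓ x y ⟨n, hn⟩ j * ℓ ⟨n, hn⟩ (x ⟨n, hn⟩) (y ⟨n, hn⟩) j := by
      rw [Finset.mul_sum]
      apply Finset.sum_congr rfl
      intro j _
      rw [hchij n hn j]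
      field_simp
      exact (mul_div_cancel_right₀ _ (hΦpos n).ne').symm
    have hGn : ∑ j : Fin d, chiWeight η ℓ x y ⟨n, hn⟩ j * ℓ ⟨n, hn⟩ (x ⟨n, hn⟩) (y ⟨n, hn⟩) j
        ≤ w ⟨n, hn⟩ := hround ⟨n, hn⟩
    have hchain : Φ (n+1) ≤ Φ n * (1 + η * w ⟨n, hn⟩ + η^2 * C^2) := by
      calc Φ (n+1) = ∑ j : Fin d, Real.exp (η * L (n+1) j) := by simp only [hΦ]
        _ ≤ ∑ j : Fin d, Real.exp (η * L n j) *
            (1 + η * ℓ ⟨n, hn⟩ (x ⟨n, hn⟩) (y ⟨n, hn⟩) j + η^2 * C^2) :=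
          Finset.sum_le_sum (fun j _ => hterm j)
        _ = Φ n * (1 + η^2 * C^2) +
            η * ∑ j : Fin d, Real.exp (η * L n j) * ℓ ⟨n, hn⟩ (x ⟨n, hn⟩) (y ⟨n, hn⟩) j := by
          simp only [hΦ]
          rw [Finset.sum_mul, Finset.mul_sum, ← Finset.sum_add_distrib]
          apply Finset.sum_congr rfl
          intro j _
          ring
        _ ≤ Φ n * (1 + η^2 * C^2) + η * (Φ n * w ⟨n, hn⟩) := by
          rw [hkey]
          have := mul_le_mul_of_nonneg_left hGn (hΦpos n).le
          nlinarith [hηpos]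
        _ = Φ n * (1 + η * w ⟨n, hn⟩ + η^2 * C^2) := by ring
    refine le_trans hchain ?_
    apply mul_le_mul_of_nonneg_left _ (hΦpos n).le
    have := Real.add_one_le_exp (η * w ⟨n, hn⟩ + η^2 * C^2)
    linarith
  have hind : ∀ n, n ≤ T → Φ n ≤ d * Real.exp (η * Wp n + n * (η^2 * C^2)) := by
    intro n
    induction n with
    | zero =>
      intro _
      have hFs0 : Fs 0 = ∅ := by
        ext s; simp [hFs]
      have hΦ0 : Φ 0 = d := by
        simp only [hΦ, hL, hFs0, Finset.sum_empty, mul_zero, Real.exp_zero]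
        simp
      have hW0 : Wp 0 = 0 := by
        simp only [hWp, hFs0, Finset.sum_empty]
      rw [hΦ0, hW0]
      simp
    | succ n ih =>
      intro hn1
      have hn : n < T := hn1
      have h1 := hstep n hn
      have h2 := ih (le_of_lt hn)
      have hWsucc : Wp (n+1) = Wp n + w ⟨n, hn⟩ := by
        simp only [hWp]
        rw [hFsucc n hn hn, Finset.sum_insert (hnotmem n hn)]
        ring
      calc Φ (n+1) ≤ Φ n * Real.exp (η * w ⟨n, hn⟩ + η^2 * C^2) := h1
        _ ≤ (d * Real.exp (η * Wp n + n * (η^2 * C^2))) *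
            Real.exp (η * w ⟨n, hn⟩ + η^2 * C^2) :=
          mul_le_mul_of_nonneg_right h2 (Real.exp_pos _).le
        _ = d * Real.exp (η * Wp (n+1) + ((n+1 : ℕ) : ℝ) * (η^2 * C^2)) := by
          rw [mul_assoc, ← Real.exp_add]
          congr 2
          rw [hWsucc]
          push_cast
          ring
  have hmain : ∀ j : Fin d, L T j - Wp T ≤ Real.log d / η + T * η * C^2 := by
    intro j
    have hfin : Real.exp (η * L T j) ≤ Φ T :=
      Finset.single_le_sum (f := fun i => Real.exp (η * L T i))
        (fun i _ => (Real.exp_pos _).le) (Finset.mem_univ j)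
    have h1 := le_trans hfin (hind T le_rfl)
    have hdpos : (0:ℝ) < d := by positivity
    have h2 : η * L T j ≤ Real.log d + (η * Wp T + T * (η^2 * C^2)) := by
      have hlog := Real.log_le_log (Real.exp_pos _) h1
      rwa [Real.log_exp, Real.log_mul hdpos.ne' (Real.exp_pos _).ne', Real.log_exp] at hlog
    have hd1 : L T j - Wp T ≤ (Real.log d + T * (η^2 * C^2)) / η := by
      rw [le_div_iff₀ hηpos]
      nlinarith
    calc L T j - Wp T ≤ (Real.log d + T * (η^2 * C^2)) / η := hd1
      _ = Real.log d / η + T * η * C^2 := by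
        field_simp
  -- numerics
  set sq : ℝ := Real.sqrt (T * Real.log d) with hsq
  have hs2 : sq^2 = T * Real.log d := Real.sq_sqrt (by positivity)
  have hspos : 0 < sq := Real.sqrt_pos.2 (by positivity)
  have keyeq : ∀ u v : ℝ, 0 ≤ u → 0 ≤ v → u^2 = v^2 → u = v := by
    intro u v hu hv h
    rw [← Real.sqrt_sq hu, h, Real.sqrt_sq hv]
  have e1 : Real.log d / η = 2 * C * sq := by
    apply keyeq _ _ (by positivity) (by positivity)
    have h1 : (Real.log d / η)^2 = 4 * T * C^2 * Real.log d := by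
      rw [div_pow, hη2]
      field_simp
    have h2 : (2 * C * sq)^2 = 4 * C^2 * (T * Real.log d) := by
      rw [mul_pow, mul_pow, hs2]
      ring
    rw [h1, h2]
    ring
  have e2 : T * η * C^2 = C * sq / 2 := by
    apply keyeq _ _ (by positivity) (by positivity)
    have h1 : (T * η * C^2)^2 = T * C^2 * Real.log d / 4 := by
      rw [mul_pow, mul_pow, hη2]
      field_simp
    have h2 : (C * sq / 2)^2 = C^2 * (T * Real.log d) / 4 := by
      rw [div_pow, mul_pow, hs2]
      ring
    rw [h1, h2]
    ring
  apply ciSup_le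
  intro j
  have hLT : (∑ t, ℓ t (x t) (y t) j) = L T j := by
    simp only [hL]
    rw [hFfull]
  have hWT : (∑ t, w t) = Wp T := by
    simp only [hWp]
    rw [hFfull]
  rw [hLT, hWT]
  calc L T j - Wp T ≤ Real.log d / η + T * η * C^2 := hmain j
    _ = 2 * C * sq + C * sq / 2 := by rw [e1, e2]
    _ ≤ 4 * C * sq := by nlinarith [mul_nonneg hC.le hspos.le]


end
end

section
/- In the probabilistic AMF framework with T ≥ ln d, the Learner who at each round plays a minimax-optimal mixture x^t ∈ argmin_{x∈ΔA^t} max_{y∈Y^t} Σ_{j∈[d]} χ^t_j · E_{a∼x}[ℓ^t_j(a, y)] with learning rate η = √(ln d / (4TC²)) guarantees: for any δ ∈ (0,1), with probability at least 1−δ over the randomness of the realized outcomes, max_{j∈[d]} ( Σ_{t=1}^T ℓ^t_j(a^t, y^t) − Σ_{t=1}^T w^t_A ) ≤ 8C·√(T·ln(d/δ)). -/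
open scoped BigOperators

noncomputable section

/-- The prefix of a full transcript `a` before round `t`. -/
def transcriptPrefix {A : Type*} {T : ℕ} (a : Fin T → A) (t : Fin T) : Fin t.1 → A :=
  fun s => a ⟨s.1, s.2.trans t.2⟩

/-- The prefix of a history `h` before its `s`-th entry. -/
def historyPrefix {A : Type*} {m : ℕ} (h : Fin m → A) (s : Fin m) : Fin s.1 → A :=
  fun u => h ⟨u.1, u.2.trans s.2⟩

/-- The set of mixtures (probability vectors) over a finite action set `S ⊆ 𝒜`. -/
def mixtures {𝒜 : Type*} [Fintype 𝒜] (S : Finset 𝒜) : Set (𝒜 → ℝ) :=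
  {p | (∀ a, 0 ≤ p a) ∧ (∀ a ∉ S, p a = 0) ∧ ∑ a, p a = 1}

/-- The probabilistic Adversary-Moves-First value:
`w_A = sup_{y ∈ Y} inf_{x ∈ ΔA} max_j E_{a∼x}[ℓ_j(a,y)]`. -/
noncomputable def amfValueProb {𝒜 : Type*} [Fintype 𝒜] {M d : ℕ}
    (S : Finset 𝒜) (Y : Set (Euc M)) (L : 𝒜 → Euc M → Fin d → ℝ) : ℝ :=
  sSup ((fun y => sInf ((fun p => ⨆ j, ∑ a, p a * L a y j) '' mixtures S)) '' Y)





lemma exp_quad {x : ℝ} (hx : |x| ≤ 1) : Real.exp x ≤ 1 + x + x ^ 2 := by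
  have h := Real.exp_bound hx (n := 2) (by norm_num)
  have h2 : ∑ m ∈ Finset.range 2, x ^ m / (m.factorial : ℝ) = 1 + x := by
    simp [Finset.sum_range_succ]
  rw [h2] at h
  have h3 : |x| ^ 2 * ((2:ℕ).succ / ((2:ℕ).factorial * 2) : ℝ) = x ^ 2 * (3/4) := by
    rw [sq_abs]; norm_num
  have h4 : |Real.exp x - (1 + x)| ≤ x ^ 2 * (3 / 4) := by
    refine h.trans (le_of_eq ?_)
    rw [sq_abs]; norm_num
  have := abs_le.mp h4
  nlinarith [sq_nonneg x]

lemma mgf_step {ι : Type*} [Fintype ι] (p v : ι → ℝ) (K : ℝ)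
    (hp0 : ∀ i, 0 ≤ p i) (hp1 : ∑ i, p i = 1) (hmean : ∑ i, p i * v i = 0)
    (hb : ∀ i, p i ≠ 0 → |v i| ≤ K) (hK : K ≤ 1) :
    ∑ i, p i * Real.exp (v i) ≤ Real.exp (K ^ 2) := by
  have key : ∀ i, p i * Real.exp (v i) ≤ p i * (1 + v i + K ^ 2) := by
    intro i
    rcases eq_or_ne (p i) 0 with h | h
    · simp [h]
    · have hpi : 0 < p i := lt_of_le_of_ne (hp0 i) (Ne.symm h)
      have hv := hb i h
      have h1 : Real.exp (v i) ≤ 1 + v i + (v i) ^ 2 := exp_quad (hv.trans hK)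
      have h2 : (v i) ^ 2 ≤ K ^ 2 := by
        rw [← sq_abs]
        exact pow_le_pow_left₀ (abs_nonneg _) hv 2
      nlinarith
  calc ∑ i, p i * Real.exp (v i) ≤ ∑ i, p i * (1 + v i + K ^ 2) :=
        Finset.sum_le_sum fun i _ => key i
    _ = (∑ i, p i) + (∑ i, p i * v i) + K ^ 2 * ∑ i, p i := by
        rw [Finset.sum_congr rfl (fun i _ => by ring :
          ∀ i ∈ Finset.univ, p i * (1 + v i + K ^ 2) = p i + p i * v i + K ^ 2 * p i),
          Finset.sum_add_distrib, Finset.sum_add_distrib, ← Finset.mul_sum]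

    _ = 1 + K ^ 2 := by rw [hp1, hmean]; ring
    _ ≤ Real.exp (K ^ 2) := by linarith [Real.add_one_le_exp (K ^ 2)]



lemma pre_snoc_cast {𝒜 : Type*} {T : ℕ} (g : Fin T → 𝒜) (b : 𝒜) (t : Fin T) :
    transcriptPrefix (Fin.snoc g b) t.castSucc = transcriptPrefix g t := by
  funext s
  show (Fin.snoc g b : Fin (T+1) → 𝒜) ⟨s.1, _⟩ = g ⟨s.1, _⟩
  have hs : s.1 < T := s.2.trans t.2
  have : (⟨s.1, (s.2.trans (t.castSucc.2))⟩ : Fin (T+1)) = Fin.castSucc ⟨s.1, hs⟩ := rfl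
  rw [this, Fin.snoc_castSucc]

lemma pre_snoc_last {𝒜 : Type*} {T : ℕ} (g : Fin T → 𝒜) (b : 𝒜) :
    transcriptPrefix (Fin.snoc g b) (Fin.last T) = g := by
  funext s
  show (Fin.snoc g b : Fin (T+1) → 𝒜) ⟨s.1, _⟩ = g s
  have : (⟨s.1, (s.2.trans (Fin.last T).2)⟩ : Fin (T+1)) = Fin.castSucc s := rfl
  rw [this, Fin.snoc_castSucc]

lemma sum_snoc_decomp {𝒜 : Type*} [Fintype 𝒜] {T : ℕ} (f : (Fin (T+1) → 𝒜) → ℝ) :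
    ∑ a : Fin (T+1) → 𝒜, f a = ∑ g : Fin T → 𝒜, ∑ b : 𝒜, f (Fin.snoc g b) := by
  have hbij : Function.Bijective
      (fun q : (Fin T → 𝒜) × 𝒜 => (Fin.snoc q.1 q.2 : Fin (T+1) → 𝒜)) := by
    constructor
    · intro q q' h
      have h1 : q.1 = q'.1 := by
        funext i; have := congrFun h i.castSucc; simpa [Fin.snoc_castSucc] using this
      have h2 : q.2 = q'.2 := by
        have := congrFun h (Fin.last T); simpa [Fin.snoc_last] using this
      exact Prod.ext h1 h2
    · intro h
      exact ⟨(fun i => h i.castSucc, h (Fin.last T)), by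
        funext i
        rcases Fin.eq_castSucc_or_eq_last i with ⟨j, rfl⟩ | rfl
        · simp [Fin.snoc_castSucc]
        · simp [Fin.snoc_last]⟩
  have e : ∑ q : (Fin T → 𝒜) × 𝒜, f (Fin.snoc q.1 q.2) = ∑ a : Fin (T+1) → 𝒜, f a :=
    Fintype.sum_bijective _ hbij _ _ (fun q => rfl)
  rw [← e, Fintype.sum_prod_type]

lemma chernoff_tree {𝒜 : Type*} [Fintype 𝒜] :
    ∀ (T : ℕ) (p D : ∀ t : Fin T, (Fin t.1 → 𝒜) → 𝒜 → ℝ) (c : ℝ),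
    (∀ t h b, 0 ≤ p t h b) → (∀ t h, ∑ b, p t h b = 1) →
    (∀ t h, ∑ b, p t h b * Real.exp (D t h b) ≤ Real.exp c) →
    ∑ a : Fin T → 𝒜, (∏ t, p t (transcriptPrefix a t) (a t)) *
      Real.exp (∑ t, D t (transcriptPrefix a t) (a t)) ≤ Real.exp (c * T) := by
  intro T
  induction T with
  | zero =>
    intro p D c hp0 hp1 hstep
    simp
  | succ T ih =>
    intro p D c hp0 hp1 hstep
    rw [sum_snoc_decomp]
    have key : ∀ g : Fin T → 𝒜,
        ∑ b : 𝒜, (∏ t, p t (transcriptPrefix (Fin.snoc g b : Fin (T+1) → 𝒜) t) ((Fin.snoc g b : Fin (T+1) → 𝒜) t)) *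
          Real.exp (∑ t, D t (transcriptPrefix (Fin.snoc g b : Fin (T+1) → 𝒜) t) ((Fin.snoc g b : Fin (T+1) → 𝒜) t))
        ≤ ((∏ t : Fin T, p t.castSucc (transcriptPrefix g t) (g t)) *
            Real.exp (∑ t : Fin T, D t.castSucc (transcriptPrefix g t) (g t))) * Real.exp c := by
      intro g
      have hrw : ∀ b : 𝒜,
          (∏ t, p t (transcriptPrefix (Fin.snoc g b : Fin (T+1) → 𝒜) t) ((Fin.snoc g b : Fin (T+1) → 𝒜) t)) *
            Real.exp (∑ t, D t (transcriptPrefix (Fin.snoc g b : Fin (T+1) → 𝒜) t) ((Fin.snoc g b : Fin (T+1) → 𝒜) t))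
          = ((∏ t : Fin T, p t.castSucc (transcriptPrefix g t) (g t)) *
              Real.exp (∑ t : Fin T, D t.castSucc (transcriptPrefix g t) (g t))) *
            (p (Fin.last T) g b * Real.exp (D (Fin.last T) g b)) := by
        intro b
        rw [Fin.prod_univ_castSucc, Fin.sum_univ_castSucc]
        have e1 : ∀ t : Fin T,
            transcriptPrefix (Fin.snoc g b : Fin (T+1) → 𝒜) t.castSucc = transcriptPrefix g t :=
          fun t => pre_snoc_cast g b t
        have e2 : transcriptPrefix (Fin.snoc g b : Fin (T+1) → 𝒜) (Fin.last T) = g :=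
          pre_snoc_last g b
        simp only [e1, e2, Fin.snoc_castSucc, Fin.snoc_last, Real.exp_add]
        ring
      rw [Finset.sum_congr rfl (fun b _ => hrw b), ← Finset.mul_sum]
      have hnn : 0 ≤ (∏ t : Fin T, p t.castSucc (transcriptPrefix g t) (g t)) *
          Real.exp (∑ t : Fin T, D t.castSucc (transcriptPrefix g t) (g t)) :=
        mul_nonneg (Finset.prod_nonneg fun t _ => hp0 _ _ _) (Real.exp_nonneg _)
      exact mul_le_mul_of_nonneg_left (hstep (Fin.last T) g) hnn
    refine le_trans (Finset.sum_le_sum fun g (_ : g ∈ Finset.univ) => key g) ?_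
    calc (∑ g : Fin T → 𝒜,
          ((∏ t : Fin T, p t.castSucc (transcriptPrefix g t) (g t)) *
            Real.exp (∑ t : Fin T, D t.castSucc (transcriptPrefix g t) (g t))) * Real.exp c)
      = (∑ g : Fin T → 𝒜, (∏ t : Fin T, p t.castSucc (transcriptPrefix g t) (g t)) *
            Real.exp (∑ t : Fin T, D t.castSucc (transcriptPrefix g t) (g t))) * Real.exp c := by
          rw [Finset.sum_mul]
      _ ≤ Real.exp (c * T) * Real.exp c := by
          apply mul_le_mul_of_nonneg_right _ (Real.exp_nonneg c)
          exact ih (fun t => p t.castSucc) (fun t => D t.castSucc) c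
            (fun t h b => hp0 t.castSucc h b) (fun t h => hp1 t.castSucc h)
            (fun t h => hstep t.castSucc h)
      _ ≤ Real.exp (c * ((T:ℕ)+1 : ℕ)) := by
          apply le_of_eq; rw [← Real.exp_add]; push_cast; ring




section helpers
variable {𝒜 : Type*} [Fintype 𝒜]

lemma mixture_sum_eq_one' {S : Finset 𝒜} {p : 𝒜 → ℝ} (hp : p ∈ mixtures S) :
    ∑ a ∈ S, p a = 1 := by
  rw [← hp.2.2]
  exact Finset.sum_subset (Finset.subset_univ S) (fun a _ ha => hp.2.1 a ha)

lemma mixture_abs_le {S : Finset 𝒜} {p : 𝒜 → ℝ} (hp : p ∈ mixtures S)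
    {v : 𝒜 → ℝ} {C : ℝ} (hv : ∀ a ∈ S, |v a| ≤ C) :
    |∑ a, p a * v a| ≤ C := by
  classical
  have hC : 0 ≤ C := by
    rcases Finset.eq_empty_or_nonempty S with rfl | ⟨a0, ha0⟩
    · exfalso
      have := hp.2.2
      rw [Finset.sum_eq_zero (fun a _ => hp.2.1 a (Finset.notMem_empty a))] at this
      norm_num at this
    · exact le_trans (abs_nonneg _) (hv a0 ha0)
  calc |∑ a, p a * v a| ≤ ∑ a, |p a * v a| := Finset.abs_sum_le_sum_abs _ _
    _ ≤ ∑ a, p a * C := by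
        apply Finset.sum_le_sum
        intro a _
        by_cases haS : a ∈ S
        · rw [abs_mul, abs_of_nonneg (hp.1 a)]
          exact mul_le_mul_of_nonneg_left (hv a haS) (hp.1 a)
        · simp [hp.2.1 a haS]
    _ = C := by rw [← Finset.sum_mul, hp.2.2, one_mul]

lemma convex_comb_le_iSup {d : ℕ} (hd : 0 < d) (χ v : Fin d → ℝ)
    (hχ0 : ∀ j, 0 ≤ χ j) (hχ1 : ∑ j, χ j = 1) :
    ∑ j, χ j * v j ≤ ⨆ j, v j := by
  haveI : Nonempty (Fin d) := ⟨⟨0, hd⟩⟩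
  calc ∑ j, χ j * v j ≤ ∑ j, χ j * ⨆ i, v i := by
        apply Finset.sum_le_sum
        intro j _
        exact mul_le_mul_of_nonneg_left (le_ciSup (Set.finite_range v).bddAbove j) (hχ0 j)
    _ = ⨆ i, v i := by rw [← Finset.sum_mul, hχ1, one_mul]

lemma concaveOn_finsum {E : Type*} [AddCommMonoid E] [Module ℝ E] {ι : Type*}
    (s : Finset ι) (Y : Set E) (hY : Convex ℝ Y) (f : ι → E → ℝ)
    (h : ∀ i ∈ s, ConcaveOn ℝ Y (f i)) :
    ConcaveOn ℝ Y (fun y => ∑ i ∈ s, f i y) := by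
  classical
  induction s using Finset.induction with
  | empty => simpa using concaveOn_const 0 hY
  | @insert i s his ih =>
    simp only [Finset.sum_insert his]
    exact (h i (Finset.mem_insert_self i s)).add
      (ih fun j hj => h j (Finset.mem_insert_of_mem hj))

end helpers

lemma exists_good_mixture {𝒜 : Type} [Fintype 𝒜] {M d : ℕ} (hd : 0 < d)
    (S : Finset 𝒜) (hS : S.Nonempty) (Y : Set (Euc M)) (hYconv : Convex ℝ Y)
    (hYne : Y.Nonempty)
    (L : 𝒜 → Euc M → Fin d → ℝ) (C : ℝ)
    (hLbdd : ∀ a ∈ S, ∀ y ∈ Y, ∀ j, |L a y j| ≤ C)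
    (hLconc : ∀ a j, ConcaveOn ℝ Y (fun y => L a y j))
    (χ : Fin d → ℝ) (hχ0 : ∀ j, 0 ≤ χ j) (hχ1 : ∑ j, χ j = 1)
    {ε : ℝ} (hε : 0 < ε) :
    ∃ p ∈ mixtures S, ∀ y ∈ Y, ∑ j, χ j * ∑ a, p a * L a y j ≤ amfValueProb S Y L + ε := by
  classical
  haveI : Nonempty (Fin d) := ⟨⟨0, hd⟩⟩
  set W := amfValueProb S Y L with hW
  set g : 𝒜 → Euc M → ℝ := fun a y => ∑ j, χ j * L a y j with hg
  have swap : ∀ (p : 𝒜 → ℝ) (y : Euc M),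
      ∑ j, χ j * ∑ a, p a * L a y j = ∑ a, p a * g a y := by
    intro p y
    simp only [hg, Finset.mul_sum]
    rw [Finset.sum_comm]
    exact Finset.sum_congr rfl fun a _ => Finset.sum_congr rfl fun j _ => by ring
  -- mixtures S is nonempty
  obtain ⟨a0, ha0⟩ := hS
  have hmixne : (mixtures S).Nonempty := by
    refine ⟨fun a => if a = a0 then 1 else 0, ?_, ?_, ?_⟩
    · intro a; dsimp only; split <;> norm_num
    · intro a haS
      have : a ≠ a0 := fun h => haS (h ▸ ha0)
      simp [this]
    · simp [Finset.sum_ite_eq' Finset.univ a0 (fun _ => (1:ℝ))]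
  -- bounds on inner values
  have hval_mem_bound : ∀ y ∈ Y, ∀ p ∈ mixtures S,
      |⨆ j, ∑ a, p a * L a y j| ≤ C := by
    intro y hy p hp
    have hub : ∀ j, |∑ a, p a * L a y j| ≤ C := fun j =>
      mixture_abs_le hp (fun a ha => hLbdd a ha y hy j)
    rw [abs_le]
    constructor
    · have j0 : Fin d := ⟨0, hd⟩
      exact le_trans (neg_le_of_abs_le (hub j0))
        (le_ciSup (Set.finite_range fun j => ∑ a, p a * L a y j).bddAbove j0)
    · exact ciSup_le fun j => le_of_abs_le (hub j)
  -- key1 : at every y some pure action has weighted loss ≤ W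
  have key1 : ∀ y ∈ Y, ∃ a ∈ S, g a y ≤ W := by
    intro y hy
    have himgne : ((fun p => ⨆ j, ∑ a, p a * L a y j) '' mixtures S).Nonempty :=
      hmixne.image _
    have hinf_le_W : sInf ((fun p => ⨆ j, ∑ a, p a * L a y j) '' mixtures S) ≤ W := by
      apply le_csSup
      · refine ⟨C, ?_⟩
        rintro z ⟨y', hy', rfl⟩
        obtain ⟨p1, hp1⟩ := hmixne
        refine csInf_le_of_le ?_ ⟨p1, hp1, rfl⟩ (le_of_abs_le (hval_mem_bound y' hy' p1 hp1))
        refine ⟨-C, ?_⟩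
        rintro z ⟨p, hp, rfl⟩
        exact neg_le_of_abs_le (hval_mem_bound y' hy' p hp)
      · exact ⟨y, hy, rfl⟩
    have hmin_le_inf : S.inf' ⟨a0, ha0⟩ (fun a => g a y) ≤
        sInf ((fun p => ⨆ j, ∑ a, p a * L a y j) '' mixtures S) := by
      apply le_csInf himgne
      rintro z ⟨p, hp, rfl⟩
      have hA : ∑ a, p a * g a y ≤ ⨆ j, ∑ a, p a * L a y j := by
        have : ∑ a, p a * g a y = ∑ j, χ j * ∑ a, p a * L a y j := (swap p _).symm
        rw [this]
        exact convex_comb_le_iSup hd χ _ hχ0 hχ1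
      have hB : S.inf' ⟨a0, ha0⟩ (fun a => g a y) ≤ ∑ a, p a * g a y := by
        calc S.inf' ⟨a0, ha0⟩ (fun a => g a y)
            = ∑ a, p a * S.inf' ⟨a0, ha0⟩ (fun a => g a y) := by
              rw [← Finset.sum_mul, hp.2.2, one_mul]
          _ ≤ ∑ a, p a * g a y := by
              apply Finset.sum_le_sum
              intro a _
              by_cases haS : a ∈ S
              · exact mul_le_mul_of_nonneg_left (Finset.inf'_le _ haS) (hp.1 a)
              · simp [hp.2.1 a haS]
      exact hB.trans hA
    obtain ⟨amin, haminS, hamin⟩ := Finset.exists_mem_eq_inf' ⟨a0, ha0⟩ (fun a => g a y)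
    exact ⟨amin, haminS, by rw [← hamin]; exact hmin_le_inf.trans hinf_le_W⟩
  -- separation
  set sOpen : Set (𝒜 → ℝ) := ⋂ a ∈ S, {z : 𝒜 → ℝ | W + ε/2 < z a} with hsOpen
  set tSet : Set (𝒜 → ℝ) :=
    {z | ∃ y ∈ Y, (∀ a ∈ S, z a ≤ g a y) ∧ ∀ a ∉ S, z a = 0} with htSet
  have hsconv : Convex ℝ sOpen := by
    apply convex_iInter; intro a; apply convex_iInter; intro _
    exact (convex_Ioi (W + ε/2)).linear_preimage (LinearMap.proj (R := ℝ) (φ := fun _ : 𝒜 => ℝ) a)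
  have hsopen : IsOpen sOpen :=
    isOpen_biInter_finset fun a _ => isOpen_Ioi.preimage (continuous_apply a)
  have htconv : Convex ℝ tSet := by
    rintro z1 ⟨y1, hy1, hz1, hz1'⟩ z2 ⟨y2, hy2, hz2, hz2'⟩ lam mu hlam hmu hlm
    refine ⟨lam • y1 + mu • y2, hYconv hy1 hy2 hlam hmu hlm, ?_, ?_⟩
    · intro a haS
      have hconc : ConcaveOn ℝ Y (g a) := by
        apply concaveOn_finsum _ _ hYconv
        intro j _
        simpa [smul_eq_mul] using (hLconc a j).smul (hχ0 j)
      have := hconc.2 hy1 hy2 hlam hmu hlm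
      have h1 : lam * z1 a + mu * z2 a ≤ lam * g a y1 + mu * g a y2 := by
        have := mul_le_mul_of_nonneg_left (hz1 a haS) hlam
        have := mul_le_mul_of_nonneg_left (hz2 a haS) hmu
        linarith [mul_le_mul_of_nonneg_left (hz1 a haS) hlam,
          mul_le_mul_of_nonneg_left (hz2 a haS) hmu]
      calc (lam • z1 + mu • z2) a = lam * z1 a + mu * z2 a := rfl
        _ ≤ lam * g a y1 + mu * g a y2 := h1
        _ ≤ g a (lam • y1 + mu • y2) := by
            simpa [smul_eq_mul] using hconc.2 hy1 hy2 hlam hmu hlm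
    · intro a haS
      have : (lam • z1 + mu • z2) a = lam * z1 a + mu * z2 a := rfl
      rw [this, hz1' a haS, hz2' a haS]; ring
  have hdisj : Disjoint sOpen tSet := by
    rw [Set.disjoint_left]
    rintro z hzs ⟨y, hy, hz1, _⟩
    obtain ⟨a, haS, hga⟩ := key1 y hy
    have h1 : W + ε/2 < z a := by
      have := Set.mem_iInter₂.mp hzs a haS
      exact this
    have h2 : z a ≤ g a y := hz1 a haS
    linarith
  obtain ⟨f, u, hfs, hft⟩ := geometric_hahn_banach_open hsconv hsopen htconv hdisj
  set coeff : 𝒜 → ℝ := fun a => f (fun j => if a = j then 1 else 0) with hcoeff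
  have frepr : ∀ z : 𝒜 → ℝ, f z = ∑ a, z a * coeff a := by
    intro z
    conv_lhs => rw [pi_eq_sum_univ z]
    rw [map_sum]
    exact Finset.sum_congr rfl fun a _ => by rw [map_smul]; simp [smul_eq_mul, hcoeff]
  -- base point in sOpen
  have hbase : ∀ z : 𝒜 → ℝ, (∀ a ∈ S, W + ε/2 < z a) → z ∈ sOpen := by
    intro z hz
    exact Set.mem_iInter₂.mpr fun a ha => hz a ha
  set zb : 𝒜 → ℝ := fun _ => W + ε/2 + 1 with hzb
  have hzbs : zb ∈ sOpen := hbase _ fun a _ => by simp [hzb]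
  have hfzb : f zb < u := hfs zb hzbs
  -- coefficients are ≤ 0, and vanish off S
  have hcnonpos : ∀ a : 𝒜, coeff a ≤ 0 := by
    intro a
    by_contra hpos
    push_neg at hpos
    set r := (u - f zb) / coeff a with hr
    have hrpos : 0 < r := div_pos (by linarith) hpos
    have hmem : zb + r • (fun j => if a = j then (1:ℝ) else 0) ∈ sOpen := by
      apply hbase
      intro b hbS
      have : (0:ℝ) ≤ r • (if a = b then (1:ℝ) else 0) := by
        split <;> simp [hrpos.le]
      have h2 : (zb + r • (fun j => if a = j then (1:ℝ) else 0)) b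
          = zb b + r * (if a = b then 1 else 0) := rfl
      rw [h2]
      have : (0:ℝ) ≤ r * (if a = b then 1 else 0) := by
        split <;> simp [hrpos.le]
      simp only [hzb]; linarith
    have h5 := hfs _ hmem
    rw [map_add, map_smul, smul_eq_mul] at h5
    have h6 : f zb + r * coeff a < u := h5
    rw [hr, div_mul_cancel₀ _ (ne_of_gt hpos)] at h6
    linarith
  have hczero : ∀ a ∉ S, coeff a = 0 := by
    intro a haS
    rcases lt_trichotomy (coeff a) 0 with hneg | hzero | hpos
    · exfalso
      set r := (u - f zb) / coeff a with hr
      have hmem : zb + r • (fun j => if a = j then (1:ℝ) else 0) ∈ sOpen := by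
        apply hbase
        intro b hbS
        have hne : a ≠ b := fun h => haS (h ▸ hbS)
        have h2 : (zb + r • (fun j => if a = j then (1:ℝ) else 0)) b
            = zb b + r * (if a = b then 1 else 0) := rfl
        rw [h2, if_neg hne]
        simp only [hzb]; linarith
      have h5 := hfs _ hmem
      rw [map_add, map_smul, smul_eq_mul] at h5
      have h6 : f zb + r * coeff a < u := h5
      rw [hr, div_mul_cancel₀ _ (ne_of_lt hneg)] at h6
      linarith
    · exact hzero
    · exact absurd hpos (not_lt.mpr (hcnonpos a))
  -- t side elements
  have hzt : ∀ y ∈ Y, (fun a => if a ∈ S then g a y else 0) ∈ tSet := by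
    intro y hy
    exact ⟨y, hy, fun a ha => by simp [ha], fun a ha => by simp [ha]⟩
  have hfzt : ∀ y ∈ Y, u ≤ ∑ a ∈ S, g a y * coeff a := by
    intro y hy
    have := hft _ (hzt y hy)
    rw [frepr] at this
    refine this.trans (le_of_eq ?_)
    rw [← Finset.sum_subset (Finset.subset_univ S)
      (fun a _ ha => by simp [if_neg ha])]
    exact Finset.sum_congr rfl fun a ha => by simp [ha]
  -- total coefficient is negative
  have hsum_nonpos : ∑ a ∈ S, coeff a ≤ 0 :=
    Finset.sum_nonpos fun a _ => hcnonpos a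
  have htot : ∑ a ∈ S, coeff a < 0 := by
    rcases lt_or_eq_of_le hsum_nonpos with h | h
    · exact h
    · exfalso
      have hall : ∀ a ∈ S, coeff a = 0 :=
        (Finset.sum_eq_zero_iff_of_nonpos fun a _ => hcnonpos a).mp h
      have hf0 : ∀ z : 𝒜 → ℝ, f z = 0 := by
        intro z
        rw [frepr]
        apply Finset.sum_eq_zero
        intro a _
        by_cases haS : a ∈ S
        · rw [hall a haS, mul_zero]
        · rw [hczero a haS, mul_zero]
      obtain ⟨y0, hy0⟩ := hYne
      have h1 : (0:ℝ) < u := by have := hfzb; rw [hf0] at this; exact this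
      have h2 := hft _ (hzt y0 hy0)
      rw [hf0] at h2
      linarith
  -- the upper bound point
  have hupper : (W + ε) * ∑ a ∈ S, coeff a < u := by
    have hmem : (fun _ : 𝒜 => W + ε) ∈ sOpen := hbase _ fun a _ => by linarith
    have := hfs _ hmem
    rw [frepr] at this
    have heq : ∑ a, (W + ε) * coeff a = (W + ε) * ∑ a ∈ S, coeff a := by
      rw [← Finset.mul_sum, ← Finset.sum_subset (Finset.subset_univ S)
        (fun a _ ha => by rw [hczero a ha])]
    rw [heq] at this
    exact this
  -- define the mixture p
  set sumc := ∑ a ∈ S, coeff a with hsumc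
  refine ⟨fun a => if a ∈ S then coeff a / sumc else 0, ⟨?_, ?_, ?_⟩, ?_⟩
  · intro a
    by_cases haS : a ∈ S
    · simp only [if_pos haS]
      rw [show coeff a / sumc = (-coeff a)/(-sumc) by rw [neg_div_neg_eq]]
      exact div_nonneg (by linarith [hcnonpos a]) (by linarith)
    · simp [haS]
  · intro a haS; simp [haS]
  · rw [← Finset.sum_subset (Finset.subset_univ S) (fun a _ ha => by simp [ha])]
    rw [Finset.sum_congr rfl (fun a ha => if_pos ha), ← Finset.sum_div, ← hsumc,
      div_self (ne_of_lt htot)]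
  · intro y hy
    rw [swap]
    have heq : ∑ a, (if a ∈ S then coeff a / sumc else 0) * g a y
        = (∑ a ∈ S, g a y * coeff a) / sumc := by
      rw [← Finset.sum_subset (Finset.subset_univ S) (fun a _ ha => by simp [ha]),
        Finset.sum_div]
      exact Finset.sum_congr rfl fun a ha => by rw [if_pos ha]; ring
    rw [heq]
    have h1 : (∑ a ∈ S, g a y * coeff a) / sumc ≤ u / sumc := by
      have hnum : u - ∑ a ∈ S, g a y * coeff a ≤ 0 := by linarith [hfzt y hy]
      have : 0 ≤ (u - ∑ a ∈ S, g a y * coeff a) / sumc := by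
        rw [show (u - ∑ a ∈ S, g a y * coeff a) / sumc
          = (-(u - ∑ a ∈ S, g a y * coeff a))/(-sumc) by rw [neg_div_neg_eq]]
        exact div_nonneg (by linarith) (by linarith)
      have hsplit : (u - ∑ a ∈ S, g a y * coeff a) / sumc
          = u / sumc - (∑ a ∈ S, g a y * coeff a) / sumc := by
        rw [sub_div]
      linarith [hsplit ▸ this]
    have h2 : u / sumc < W + ε := by
      rw [div_lt_iff_of_neg htot]
      exact hupper
    linarith


set_option maxHeartbeats 1000000 in
lemma amf_core {𝒜 : Type} [Fintype 𝒜] (T d : ℕ) (hd : 1 ≤ d) (C η : ℝ) (hC : 0 < C)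
    (hTpos : 0 < T) (hT : Real.log d ≤ T)
    (hη : η = Real.sqrt (Real.log d / (4 * T * C ^ 2)))
    (Af : ∀ t : Fin T, (Fin t.1 → 𝒜) → Finset 𝒜)
    (ℓ : ∀ t : Fin T, (Fin t.1 → 𝒜) → 𝒜 → Fin d → ℝ)
    (w : ∀ t : Fin T, (Fin t.1 → 𝒜) → ℝ)
    (x : ∀ t : Fin T, (Fin t.1 → 𝒜) → 𝒜 → ℝ)
    (hxmix : ∀ t h, x t h ∈ mixtures (Af t h))
    (hℓb : ∀ t h, ∀ b ∈ Af t h, ∀ j, |ℓ t h b j| ≤ C)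
    (hround : ∀ t h, ∑ j : Fin d,
        (Real.exp (η * ∑ s : Fin t.1, ℓ ⟨s.1, s.2.trans t.2⟩ (historyPrefix h s) (h s) j) /
          ∑ i : Fin d, Real.exp (η * ∑ s : Fin t.1,
            ℓ ⟨s.1, s.2.trans t.2⟩ (historyPrefix h s) (h s) i)) *
        (∑ b, x t h b * ℓ t h b j) ≤ w t h)
    (δ : ℝ) (hδ : δ ∈ Set.Ioo (0:ℝ) 1) :
    ∑ a : Fin T → 𝒜,
      (if 8 * C * Real.sqrt (T * Real.log (d / δ)) <
          (⨆ j : Fin d, ((∑ t, ℓ t (transcriptPrefix a t) (a t) j) -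
            ∑ t, w t (transcriptPrefix a t)))
        then (∏ t, x t (transcriptPrefix a t) (a t)) else 0) ≤ δ := by
  classical
  have hd0 : 0 < d := hd
  haveI : Nonempty (Fin d) := ⟨⟨0, hd0⟩⟩
  have hdR : (1:ℝ) ≤ (d:ℝ) := by exact_mod_cast hd
  have hlog0 : 0 ≤ Real.log d := Real.log_nonneg hdR
  have hη0 : 0 ≤ η := hη ▸ Real.sqrt_nonneg _
  have hTR : (0:ℝ) < (T:ℝ) := by exact_mod_cast hTpos
  have hδpos : 0 < δ := hδ.1
  have hδlt : δ < 1 := hδ.2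
  -- η * C ≤ 1/2
  have hηC : η * C ≤ 1/2 := by
    have h1 : η * C = Real.sqrt (Real.log d / (4 * T * C ^ 2) * C ^ 2) := by
      rw [hη, Real.sqrt_mul (by positivity), Real.sqrt_sq hC.le]
    have h2 : Real.log d / (4 * T * C ^ 2) * C ^ 2 = Real.log d / (4 * T) := by
      field_simp
    have h3 : Real.log d / (4 * T) ≤ 1/4 := by
      rw [div_le_iff₀ (by positivity)]
      linarith
    rw [h1, h2]
    calc Real.sqrt (Real.log d / (4 * T)) ≤ Real.sqrt (1/4) :=
          Real.sqrt_le_sqrt h3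
      _ = 1/2 := by
          rw [show (1/4 : ℝ) = (1/2)^2 by norm_num, Real.sqrt_sq (by norm_num)]
  -- abbreviations
  obtain ⟨SL, hSL⟩ : ∃ SL : ∀ t : Fin T, (Fin t.1 → 𝒜) → Fin d → ℝ, ∀ t h j,
      SL t h j = ∑ s : Fin t.1, ℓ ⟨s.1, s.2.trans t.2⟩ (historyPrefix h s) (h s) j :=
    ⟨_, fun _ _ _ => rfl⟩
  obtain ⟨χf, hχf⟩ : ∃ χf : ∀ t : Fin T, (Fin t.1 → 𝒜) → Fin d → ℝ, ∀ t h j,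
      χf t h j = Real.exp (η * SL t h j) / ∑ i, Real.exp (η * SL t h i) :=
    ⟨_, fun _ _ _ => rfl⟩
  obtain ⟨mf, hmf⟩ : ∃ mf : ∀ t : Fin T, (Fin t.1 → 𝒜) → Fin d → ℝ, ∀ t h j,
      mf t h j = ∑ b, x t h b * ℓ t h b j := ⟨_, fun _ _ _ => rfl⟩
  obtain ⟨ξf, hξf⟩ : ∃ ξf : ∀ t : Fin T, (Fin t.1 → 𝒜) → 𝒜 → ℝ, ∀ t h b,
      ξf t h b = ∑ j, χf t h j * (ℓ t h b j - mf t h j) := ⟨_, fun _ _ _ => rfl⟩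
  have hround' : ∀ t h, ∑ j, χf t h j * mf t h j ≤ w t h := by
    intro t h
    have h0 := hround t h
    simp only [← hSL, ← hmf] at h0
    simp only [← hχf] at h0
    exact h0
  -- chi facts
  have hDpos : ∀ t h, 0 < ∑ i, Real.exp (η * SL t h i) := fun t h =>
    Finset.sum_pos (fun i _ => Real.exp_pos _) Finset.univ_nonempty
  have hχ0 : ∀ t h j, 0 ≤ χf t h j := by
    intro t h j; rw [hχf]
    exact div_nonneg (Real.exp_nonneg _) (hDpos t h).le
  have hχ1 : ∀ t h, ∑ j, χf t h j = 1 := by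
    intro t h
    rw [Finset.sum_congr rfl fun j _ => hχf t h j, ← Finset.sum_div,
      div_self (ne_of_gt (hDpos t h))]
  -- bounds
  have hmb : ∀ t h j, |mf t h j| ≤ C := by
    intro t h j; rw [hmf]
    exact mixture_abs_le (hxmix t h) (fun b hb => hℓb t h b hb j)
  have hξb : ∀ t h b, b ∈ Af t h → |ξf t h b| ≤ 2*C := by
    intro t h b hb
    rw [hξf]
    calc |∑ j, χf t h j * (ℓ t h b j - mf t h j)|
        ≤ ∑ j, |χf t h j * (ℓ t h b j - mf t h j)| := Finset.abs_sum_le_sum_abs _ _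
      _ ≤ ∑ j, χf t h j * (2*C) := by
          apply Finset.sum_le_sum
          intro j _
          rw [abs_mul, abs_of_nonneg (hχ0 t h j)]
          apply mul_le_mul_of_nonneg_left _ (hχ0 t h j)
          calc |ℓ t h b j - mf t h j| ≤ |ℓ t h b j| + |mf t h j| := abs_sub _ _
            _ ≤ C + C := add_le_add (hℓb t h b hb j) (hmb t h j)
            _ = 2*C := by ring
      _ = 2*C := by rw [← Finset.sum_mul, hχ1, one_mul]
  have hξmean : ∀ t h, ∑ b, x t h b * ξf t h b = 0 := by
    intro t h
    have : ∀ b, x t h b * ξf t h b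
        = ∑ j, (χf t h j * (x t h b * ℓ t h b j) - χf t h j * mf t h j * x t h b) := by
      intro b
      rw [hξf, Finset.mul_sum]
      exact Finset.sum_congr rfl fun j _ => by ring
    rw [Finset.sum_congr rfl fun b _ => this b, Finset.sum_comm]
    apply Finset.sum_eq_zero
    intro j _
    rw [Finset.sum_sub_distrib, ← Finset.mul_sum, ← Finset.mul_sum, (hxmix t h).2.2,
      ← hmf]
    ring
  -- the deterministic regret bound for supported transcripts
  have hKd0 : 0 ≤ (5/2)*C*Real.sqrt (T*Real.log d) := by positivity
  have Det : ∀ a : Fin T → 𝒜, (∀ t, a t ∈ Af t (transcriptPrefix a t)) →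
      (⨆ j : Fin d, ((∑ t, ℓ t (transcriptPrefix a t) (a t) j) -
        ∑ t, w t (transcriptPrefix a t)))
      ≤ (5/2)*C*Real.sqrt (T*Real.log d) + ∑ t, ξf t (transcriptPrefix a t) (a t) := by
    intro a hsupp
    obtain ⟨ℓn, hℓn⟩ : ∃ f : ℕ → Fin d → ℝ, ∀ (i : ℕ) (hi : i < T) (j : Fin d),
        f i j = ℓ ⟨i,hi⟩ (transcriptPrefix a ⟨i,hi⟩) (a ⟨i,hi⟩) j :=
      ⟨fun i j => if hi : i < T then ℓ ⟨i,hi⟩ (transcriptPrefix a ⟨i,hi⟩) (a ⟨i,hi⟩) j else 0,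
        fun i hi j => by dsimp only; rw [dif_pos hi]⟩
    obtain ⟨wn, hwn⟩ : ∃ f : ℕ → ℝ, ∀ (i : ℕ) (hi : i < T),
        f i = w ⟨i,hi⟩ (transcriptPrefix a ⟨i,hi⟩) :=
      ⟨fun i => if hi : i < T then w ⟨i,hi⟩ (transcriptPrefix a ⟨i,hi⟩) else 0,
        fun i hi => by dsimp only; rw [dif_pos hi]⟩
    obtain ⟨ξn, hξn⟩ : ∃ f : ℕ → ℝ, ∀ (i : ℕ) (hi : i < T),
        f i = ξf ⟨i,hi⟩ (transcriptPrefix a ⟨i,hi⟩) (a ⟨i,hi⟩) :=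
      ⟨fun i => if hi : i < T then ξf ⟨i,hi⟩ (transcriptPrefix a ⟨i,hi⟩) (a ⟨i,hi⟩) else 0,
        fun i hi => by dsimp only; rw [dif_pos hi]⟩
    have keySL : ∀ (t : Fin T) (j : Fin d),
        SL t (transcriptPrefix a t) j = ∑ i ∈ Finset.range t.1, ℓn i j := by
      intro t j
      rw [hSL, ← Fin.sum_univ_eq_sum_range (fun i => ℓn i j) t.1]
      apply Finset.sum_congr rfl
      intro s _
      rw [hℓn s.1 (s.2.trans t.2) j]
      rfl
    have keyFull : ∀ j : Fin d,
        ∑ t, ℓ t (transcriptPrefix a t) (a t) j = ∑ i ∈ Finset.range T, ℓn i j := by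
      intro j
      rw [← Fin.sum_univ_eq_sum_range (fun i => ℓn i j) T]
      apply Finset.sum_congr rfl
      intro t _
      rw [hℓn t.1 t.2 j]
    have keyW : ∑ t, w t (transcriptPrefix a t) = ∑ i ∈ Finset.range T, wn i := by
      rw [← Fin.sum_univ_eq_sum_range (fun i => wn i) T]
      exact Finset.sum_congr rfl fun t _ => by rw [hwn t.1 t.2]
    have keyΞ : ∑ t, ξf t (transcriptPrefix a t) (a t) = ∑ i ∈ Finset.range T, ξn i := by
      rw [← Fin.sum_univ_eq_sum_range (fun i => ξn i) T]
      exact Finset.sum_congr rfl fun t _ => by rw [hξn t.1 t.2]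
    have hℓnb : ∀ (i : ℕ) (hi : i < T) (j : Fin d), |ℓn i j| ≤ C := by
      intro i hi j
      rw [hℓn i hi j]
      exact hℓb _ _ _ (hsupp ⟨i,hi⟩) j
    -- the exponential-weights potential bound
    have pot : ∀ n, n ≤ T → (∑ j, Real.exp (η * ∑ i ∈ Finset.range n, ℓn i j)) ≤
        d * Real.exp (η * (∑ i ∈ Finset.range n, (wn i + ξn i)) + n*(η^2*C^2)) := by
      intro n
      induction n with
      | zero =>
        intro _
        simp
      | succ n ih =>
        intro hn1
        have hn : n < T := hn1
        have ihn := ih (le_of_lt hn)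
        have hDen : (0:ℝ) < ∑ j, Real.exp (η * ∑ i ∈ Finset.range n, ℓn i j) :=
          Finset.sum_pos (fun j _ => Real.exp_pos _) Finset.univ_nonempty
        have hstep1 : ∀ j : Fin d, Real.exp (η * ℓn n j) ≤ 1 + η * ℓn n j + η^2*C^2 := by
          intro j
          have habs : |η * ℓn n j| ≤ 1 := by
            rw [abs_mul, abs_of_nonneg hη0]
            calc η * |ℓn n j| ≤ η * C :=
                  mul_le_mul_of_nonneg_left (hℓnb n hn j) hη0
              _ ≤ 1/2 := hηC
              _ ≤ 1 := by norm_num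
          have h1 := exp_quad habs
          have h2 : (η * ℓn n j)^2 ≤ η^2*C^2 := by
            rw [mul_pow]
            apply mul_le_mul_of_nonneg_left _ (sq_nonneg η)
            exact sq_le_sq' (neg_le_of_abs_le (hℓnb n hn j)) (le_of_abs_le (hℓnb n hn j))
          linarith
        -- identify the weights at round n
        have tf : Fin T := ⟨n, hn⟩
        have hχrw : ∀ j, Real.exp (η * ∑ i ∈ Finset.range n, ℓn i j)
            = χf ⟨n,hn⟩ (transcriptPrefix a ⟨n,hn⟩) j *
              ∑ j', Real.exp (η * ∑ i ∈ Finset.range n, ℓn i j') := by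
          intro j
          rw [hχf]
          have e1 : ∀ j' : Fin d, SL ⟨n,hn⟩ (transcriptPrefix a ⟨n,hn⟩) j'
              = ∑ i ∈ Finset.range n, ℓn i j' := fun j' => keySL ⟨n,hn⟩ j'
          simp only [e1]
          rw [div_mul_cancel₀]
          exact ne_of_gt hDen
        have hχℓ : ∑ j, χf ⟨n,hn⟩ (transcriptPrefix a ⟨n,hn⟩) j * ℓn n j ≤ wn n + ξn n := by
          have e2 : ∀ j, ℓn n j = ℓ ⟨n,hn⟩ (transcriptPrefix a ⟨n,hn⟩) (a ⟨n,hn⟩) j :=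
            fun j => hℓn n hn j
          have e3 : ∑ j, χf ⟨n,hn⟩ (transcriptPrefix a ⟨n,hn⟩) j * ℓn n j
              = (∑ j, χf ⟨n,hn⟩ (transcriptPrefix a ⟨n,hn⟩) j *
                  mf ⟨n,hn⟩ (transcriptPrefix a ⟨n,hn⟩) j)
                + ξf ⟨n,hn⟩ (transcriptPrefix a ⟨n,hn⟩) (a ⟨n,hn⟩) := by
            rw [hξf, ← Finset.sum_add_distrib]
            apply Finset.sum_congr rfl
            intro j _
            rw [e2 j]
            ring
          rw [e3, hwn n hn, hξn n hn]
          exact add_le_add_left (hround' _ _) _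
        calc ∑ j, Real.exp (η * ∑ i ∈ Finset.range (n+1), ℓn i j)
            = ∑ j, Real.exp (η * ∑ i ∈ Finset.range n, ℓn i j) * Real.exp (η * ℓn n j) := by
              apply Finset.sum_congr rfl
              intro j _
              rw [Finset.sum_range_succ, mul_add, Real.exp_add]
          _ ≤ ∑ j, Real.exp (η * ∑ i ∈ Finset.range n, ℓn i j) *
                (1 + η * ℓn n j + η^2*C^2) := by
              apply Finset.sum_le_sum
              intro j _
              exact mul_le_mul_of_nonneg_left (hstep1 j) (Real.exp_nonneg _)
          _ = (∑ j, Real.exp (η * ∑ i ∈ Finset.range n, ℓn i j)) * (1 + η^2*C^2)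
              + η * ∑ j, Real.exp (η * ∑ i ∈ Finset.range n, ℓn i j) * ℓn n j := by
              rw [Finset.sum_mul, Finset.mul_sum, ← Finset.sum_add_distrib]
              apply Finset.sum_congr rfl
              intro j _
              ring
          _ ≤ (∑ j, Real.exp (η * ∑ i ∈ Finset.range n, ℓn i j)) * (1 + η^2*C^2)
              + η * ((∑ j, Real.exp (η * ∑ i ∈ Finset.range n, ℓn i j)) * (wn n + ξn n)) := by
              apply add_le_add_right
              apply mul_le_mul_of_nonneg_left _ hη0
              have : ∑ j, Real.exp (η * ∑ i ∈ Finset.range n, ℓn i j) * ℓn n j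
                  = (∑ j', Real.exp (η * ∑ i ∈ Finset.range n, ℓn i j')) *
                    ∑ j, χf ⟨n,hn⟩ (transcriptPrefix a ⟨n,hn⟩) j * ℓn n j := by
                rw [Finset.mul_sum]
                apply Finset.sum_congr rfl
                intro j _
                rw [hχrw j]
                ring
              rw [this]
              exact mul_le_mul_of_nonneg_left hχℓ hDen.le
          _ = (∑ j, Real.exp (η * ∑ i ∈ Finset.range n, ℓn i j)) *
                (1 + (η * (wn n + ξn n) + η^2*C^2)) := by ring
          _ ≤ (∑ j, Real.exp (η * ∑ i ∈ Finset.range n, ℓn i j)) *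
                Real.exp (η * (wn n + ξn n) + η^2*C^2) := by
              apply mul_le_mul_of_nonneg_left _ hDen.le
              linarith [Real.add_one_le_exp (η * (wn n + ξn n) + η^2*C^2)]
          _ ≤ (d * Real.exp (η * (∑ i ∈ Finset.range n, (wn i + ξn i)) + n*(η^2*C^2))) *
                Real.exp (η * (wn n + ξn n) + η^2*C^2) :=
              mul_le_mul_of_nonneg_right ihn (Real.exp_nonneg _)
          _ = d * Real.exp (η * (∑ i ∈ Finset.range (n+1), (wn i + ξn i))
                + (n+1:ℕ)*(η^2*C^2)) := by
              rw [mul_assoc, ← Real.exp_add, Finset.sum_range_succ]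
              push_cast
              rw [mul_eq_mul_left_iff]
              left
              rw [Real.exp_eq_exp]
              ring
    -- conclude the deterministic bound
    have potT := pot T le_rfl
    rcases eq_or_lt_of_le hlog0 with hlogz | hlogpos
    · -- log d = 0, i.e. d = 1
      have hd1 : d = 1 := by
        rcases Real.log_eq_zero.mp hlogz.symm with h | h | h
        · exact absurd h (by positivity)
        · exact_mod_cast h
        · exfalso; linarith [hdR]
      subst hd1
      have hχone : ∀ t h, χf t h 0 = 1 := by
        intro t h
        have := hχ1 t h
        rwa [Fin.sum_univ_one] at this
      have hperT : ∀ t : Fin T, ℓ t (transcriptPrefix a t) (a t) 0 - w t (transcriptPrefix a t)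
          ≤ ξf t (transcriptPrefix a t) (a t) := by
        intro t
        have hm : mf t (transcriptPrefix a t) 0 ≤ w t (transcriptPrefix a t) := by
          have := hround' t (transcriptPrefix a t)
          rwa [Fin.sum_univ_one, hχone, one_mul] at this
        have hx : ξf t (transcriptPrefix a t) (a t)
            = ℓ t (transcriptPrefix a t) (a t) 0 - mf t (transcriptPrefix a t) 0 := by
          rw [hξf, Fin.sum_univ_one, hχone, one_mul]
        linarith [hx]
      have : (⨆ j : Fin 1, ((∑ t, ℓ t (transcriptPrefix a t) (a t) j) -
          ∑ t, w t (transcriptPrefix a t)))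
          = (∑ t, ℓ t (transcriptPrefix a t) (a t) 0) - ∑ t, w t (transcriptPrefix a t) :=
        ciSup_unique
      rw [this]
      have h5 : (∑ t, ℓ t (transcriptPrefix a t) (a t) 0) - ∑ t, w t (transcriptPrefix a t)
          ≤ ∑ t, ξf t (transcriptPrefix a t) (a t) := by
        rw [← Finset.sum_sub_distrib]
        exact Finset.sum_le_sum fun t _ => hperT t
      linarith [h5, hKd0]
    · -- log d > 0
      have hηpos : 0 < η := by
        rw [hη]
        apply Real.sqrt_pos.2
        positivity
      -- the value of the deterministic overhead
      have hval : Real.log d / η + η*C^2*T = (5/2)*C*Real.sqrt (T*Real.log d) := by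
        have h4TC : Real.sqrt (4*T*C^2) = 2*C*Real.sqrt T := by
          rw [show (4:ℝ)*T*C^2 = (2*C)^2*T by ring, Real.sqrt_mul (by positivity),
            Real.sqrt_sq (by positivity)]
        have hη_eq : η = Real.sqrt (Real.log d)/(2*C*Real.sqrt T) := by
          rw [hη, Real.sqrt_div hlog0, h4TC]
        have hTlog : Real.sqrt ((T:ℝ)*Real.log d) = Real.sqrt T * Real.sqrt (Real.log d) :=
          Real.sqrt_mul (by positivity) _
        obtain ⟨u, hu_def, hupos, hu2⟩ : ∃ u:ℝ, Real.sqrt (Real.log d) = u ∧ 0 < u ∧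
            u*u = Real.log d :=
          ⟨_, rfl, Real.sqrt_pos.2 hlogpos, Real.mul_self_sqrt hlog0⟩
        obtain ⟨v, hv_def, hvpos, hv2⟩ : ∃ v:ℝ, Real.sqrt (T:ℝ) = v ∧ 0 < v ∧
            v*v = (T:ℝ) :=
          ⟨_, rfl, Real.sqrt_pos.2 hTR, Real.mul_self_sqrt hTR.le⟩
        rw [hη_eq, hTlog, hu_def, hv_def, ← hu2, ← hv2]
        field_simp
        ring
      have hperj : ∀ j : Fin d, (∑ i ∈ Finset.range T, ℓn i j) - ∑ i ∈ Finset.range T, wn i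
          ≤ (5/2)*C*Real.sqrt (T*Real.log d) + ∑ i ∈ Finset.range T, ξn i := by
        intro j
        have h1 : Real.exp (η * ∑ i ∈ Finset.range T, ℓn i j)
            ≤ d * Real.exp (η * (∑ i ∈ Finset.range T, (wn i + ξn i)) + T*(η^2*C^2)) := by
          refine le_trans ?_ potT
          exact Finset.single_le_sum (f := fun j => Real.exp (η * ∑ i ∈ Finset.range T, ℓn i j))
            (fun j _ => Real.exp_nonneg _) (Finset.mem_univ j)
        have h2 : η * ∑ i ∈ Finset.range T, ℓn i j
            ≤ Real.log d + (η * (∑ i ∈ Finset.range T, (wn i + ξn i)) + T*(η^2*C^2)) := by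
          have := (Real.le_log_iff_exp_le (by positivity)).mpr h1
          rwa [Real.log_mul (by positivity) (Real.exp_ne_zero _), Real.log_exp] at this
        have h3 : ∑ i ∈ Finset.range T, ℓn i j
            ≤ Real.log d / η + (∑ i ∈ Finset.range T, (wn i + ξn i)) + η*C^2*T := by
          rw [← mul_le_mul_iff_right₀ hηpos]
          calc η * ∑ i ∈ Finset.range T, ℓn i j
              ≤ Real.log d + (η * (∑ i ∈ Finset.range T, (wn i + ξn i)) + T*(η^2*C^2)) := h2
            _ = η * (Real.log d / η + (∑ i ∈ Finset.range T, (wn i + ξn i)) + η*C^2*T) := by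
                field_simp
                ring
        have h4 : ∑ i ∈ Finset.range T, (wn i + ξn i)
            = (∑ i ∈ Finset.range T, wn i) + ∑ i ∈ Finset.range T, ξn i :=
          Finset.sum_add_distrib
        rw [h4] at h3
        linarith [hval, h3]
      apply ciSup_le
      intro j
      rw [keyFull j, keyW, keyΞ]
      exact hperj j
  -- main estimate
  have hlogdd : 0 < Real.log ((d:ℝ)/δ) :=
    Real.log_pos ((one_lt_div hδpos).mpr (lt_of_lt_of_le hδlt hdR))
  obtain ⟨γ, hγdef, hγpos, hγ2⟩ : ∃ γ:ℝ, Real.sqrt ((T:ℝ) * Real.log (d/δ)) = γ ∧ 0 < γ ∧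
      γ^2 = (T:ℝ)*Real.log (d/δ) :=
    ⟨_, rfl, Real.sqrt_pos.2 (by positivity), Real.sq_sqrt (by positivity)⟩
  obtain ⟨K, hKdef⟩ : ∃ K:ℝ, (5/2)*C*Real.sqrt (T*Real.log d) = K := ⟨_, rfl⟩
  obtain ⟨s, hsdef⟩ : ∃ s:ℝ, 8*C*γ - K = s := ⟨_, rfl⟩
  have hγβ : Real.sqrt ((T:ℝ)*Real.log d) ≤ γ := by
    rw [← hγdef]
    apply Real.sqrt_le_sqrt
    apply mul_le_mul_of_nonneg_left _ hTR.le
    rw [Real.log_div (by positivity) (ne_of_gt hδpos)]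
    linarith [Real.log_neg hδpos hδlt]
  have hK0 : 0 ≤ K := by rw [← hKdef]; positivity
  have hKγ : K ≤ (5/2)*C*γ := by
    rw [← hKdef]
    exact mul_le_mul_of_nonneg_left hγβ (by positivity)
  have hs_lb : 11/2*C*γ ≤ s := by
    rw [← hsdef]; linarith
  have hspos : 0 < s := lt_of_lt_of_le (by positivity) hs_lb
  have hthr : 8*C*γ = K + s := by rw [← hsdef]; ring
  have hW0 : ∀ a : Fin T → 𝒜, 0 ≤ ∏ t, x t (transcriptPrefix a t) (a t) :=
    fun a => Finset.prod_nonneg fun t _ => (hxmix _ _).1 _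
  simp only [hγdef, hKdef]
  rcases le_or_gt s (4*C*T) with hcase | hcase
  · -- Chernoff case
    obtain ⟨lam, hlam_def⟩ : ∃ l:ℝ, s/(8*C^2*T) = l := ⟨_, rfl⟩
    have hlam_pos : 0 < lam := by rw [← hlam_def]; positivity
    have hlamK : lam*(2*C) ≤ 1 := by
      rw [← hlam_def, div_mul_eq_mul_div, div_le_one (by positivity)]
      nlinarith
    have hstep : ∀ (t : Fin T) (h : Fin t.1 → 𝒜),
        ∑ b, x t h b * Real.exp (lam * ξf t h b) ≤ Real.exp ((lam*(2*C))^2) := by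
      intro t h
      apply mgf_step (x t h) (fun b => lam * ξf t h b) (lam*(2*C))
        (hxmix t h).1 (hxmix t h).2.2
      · have e : ∀ b, x t h b * (lam * ξf t h b) = lam * (x t h b * ξf t h b) :=
          fun b => by ring
        rw [Finset.sum_congr rfl fun b _ => e b, ← Finset.mul_sum, hξmean, mul_zero]
      · intro b hb
        have hbAf : b ∈ Af t h := by
          by_contra hbn
          exact hb ((hxmix t h).2.1 b hbn)
        rw [abs_mul, abs_of_nonneg hlam_pos.le]
        calc lam * |ξf t h b| ≤ lam * (2*C) :=
              mul_le_mul_of_nonneg_left (hξb t h b hbAf) hlam_pos.le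
          _ = lam * (2*C) := rfl
      · exact hlamK
    have tree := chernoff_tree T x (fun t h b => lam * ξf t h b) ((lam*(2*C))^2)
      (fun t h b => (hxmix t h).1 b) (fun t h => (hxmix t h).2.2) hstep
    have hpoint : ∀ a : Fin T → 𝒜,
        (if 8 * C * γ < (⨆ j : Fin d, ((∑ t, ℓ t (transcriptPrefix a t) (a t) j) -
              ∑ t, w t (transcriptPrefix a t)))
          then (∏ t, x t (transcriptPrefix a t) (a t)) else 0)
        ≤ (∏ t, x t (transcriptPrefix a t) (a t)) *
            (Real.exp (∑ t, lam * ξf t (transcriptPrefix a t) (a t)) *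
              Real.exp (-(lam*s))) := by
      intro a
      by_cases hcond : 8 * C * γ < (⨆ j : Fin d, ((∑ t, ℓ t (transcriptPrefix a t) (a t) j) -
          ∑ t, w t (transcriptPrefix a t)))
      · rw [if_pos hcond]
        by_cases hsup : ∀ t, a t ∈ Af t (transcriptPrefix a t)
        · have h1 := Det a hsup
          rw [hKdef] at h1
          have hgt : s < ∑ t, ξf t (transcriptPrefix a t) (a t) := by linarith
          rw [← Real.exp_add]
          apply le_mul_of_one_le_right (hW0 a)
          apply Real.one_le_exp
          have e : ∑ t, lam * ξf t (transcriptPrefix a t) (a t)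
              = lam * ∑ t, ξf t (transcriptPrefix a t) (a t) := by rw [Finset.mul_sum]
          rw [e]
          have h6 := mul_lt_mul_of_pos_left hgt hlam_pos
          linarith
        · push_neg at hsup
          obtain ⟨t0, ht0⟩ := hsup
          have hprod : ∏ t, x t (transcriptPrefix a t) (a t) = 0 :=
            Finset.prod_eq_zero (Finset.mem_univ t0) ((hxmix _ _).2.1 _ ht0)
          rw [hprod, zero_mul]
      · rw [if_neg hcond]
        exact mul_nonneg (hW0 a) (mul_nonneg (Real.exp_nonneg _) (Real.exp_nonneg _))
    refine le_trans (Finset.sum_le_sum fun a (_ : a ∈ Finset.univ) => hpoint a) ?_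
    calc ∑ a : Fin T → 𝒜, (∏ t, x t (transcriptPrefix a t) (a t)) *
            (Real.exp (∑ t, lam * ξf t (transcriptPrefix a t) (a t)) * Real.exp (-(lam*s)))
        = (∑ a : Fin T → 𝒜, (∏ t, x t (transcriptPrefix a t) (a t)) *
            Real.exp (∑ t, lam * ξf t (transcriptPrefix a t) (a t))) * Real.exp (-(lam*s)) := by
          rw [Finset.sum_mul]
          exact Finset.sum_congr rfl fun a _ => by rw [mul_assoc]
      _ ≤ Real.exp ((lam*(2*C))^2*T) * Real.exp (-(lam*s)) :=
          mul_le_mul_of_nonneg_right tree (Real.exp_nonneg _)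
      _ = Real.exp ((lam*(2*C))^2*T + (-(lam*s))) := (Real.exp_add _ _).symm
      _ ≤ δ := by
          rw [show δ = Real.exp (Real.log δ) from (Real.exp_log hδpos).symm]
          apply Real.exp_le_exp.mpr
          have e1 : (lam*(2*C))^2*(T:ℝ) = s^2/(16*C^2*T) := by
            rw [← hlam_def]; field_simp; ring
          have e2 : lam*s = s^2/(8*C^2*T) := by
            rw [← hlam_def]; field_simp
          rw [e1, e2]
          have e3 : s^2/(16*C^2*T) + (-(s^2/(8*C^2*T))) = -(s^2/(16*C^2*(T:ℝ))) := by
            field_simp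
            ring
          rw [e3]
          have hlog1 : -Real.log δ ≤ Real.log ((d:ℝ)/δ) := by
            rw [Real.log_div (by positivity) (ne_of_gt hδpos)]
            linarith
          have hB : 16*C^2*((T:ℝ)*Real.log ((d:ℝ)/δ)) = 16*C^2*γ^2 := by rw [hγ2]
          have hsγ2 : (11/2*C*γ)^2 ≤ s^2 := by nlinarith
          have h16 : 16*C^2*(T:ℝ)*(-Real.log δ) ≤ s^2 := by
            nlinarith [mul_le_mul_of_nonneg_left hlog1
              (show (0:ℝ) ≤ 16*C^2*T by positivity), sq_nonneg (C*γ)]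
          have h17 : -Real.log δ ≤ s^2/(16*C^2*(T:ℝ)) := by
            rw [le_div_iff₀ (by positivity : (0:ℝ) < 16*C^2*(T:ℝ))]
            nlinarith [h16]
          linarith
  · -- deterministically impossible case
    have hzero : ∀ a : Fin T → 𝒜,
        (if 8 * C * γ <
            (⨆ j : Fin d, ((∑ t, ℓ t (transcriptPrefix a t) (a t) j) -
              ∑ t, w t (transcriptPrefix a t)))
          then (∏ t, x t (transcriptPrefix a t) (a t)) else 0) = 0 := by
      intro a
      by_cases hsup : ∀ t, a t ∈ Af t (transcriptPrefix a t)
      · rw [if_neg]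
        rw [not_lt]
        have h1 := Det a hsup
        rw [hKdef] at h1
        have h2 : ∑ t, ξf t (transcriptPrefix a t) (a t) ≤ 2*C*T := by
          calc ∑ t, ξf t (transcriptPrefix a t) (a t) ≤ ∑ t : Fin T, 2*C :=
                Finset.sum_le_sum fun t _ => le_of_abs_le (hξb _ _ _ (hsup t))
            _ = 2*C*T := by
                rw [Finset.sum_const, Finset.card_univ, Fintype.card_fin, nsmul_eq_mul]
                ring
        have h3 : 2*C*(T:ℝ) ≤ 4*C*T := by nlinarith
        linarith
      · push_neg at hsup
        obtain ⟨t0, ht0⟩ := hsup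
        have hprod : ∏ t, x t (transcriptPrefix a t) (a t) = 0 :=
          Finset.prod_eq_zero (Finset.mem_univ t0) ((hxmix _ _).2.1 _ ht0)
        rw [hprod, ite_self]
    rw [Finset.sum_congr rfl fun a _ => hzero a, Finset.sum_const_zero]
    exact hδpos.le

/-- **Theorem 2.8, high-probability bound for the probabilistic Learner.**
In the probabilistic AMF framework with `T ≥ ln d` and `η = √(ln d/(4TC²))`, a Learner
playing a minimax-optimal mixture at every round guarantees, against any adaptive
Adversary: for any `δ ∈ (0,1)`, with probability at least `1−δ` over the randomness of the
realized outcomes, `max_j (Σ_t ℓ^t_j(a^t,y^t) − Σ_t w^t_A) ≤ 8C√(T ln(d/δ))`. -/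
theorem probabilistic_amf_high_probability_bound
    (𝒜 : Type) [Fintype 𝒜] (T d M : ℕ) (hd : 1 ≤ d) (C : ℝ) (hC : 0 < C)
    -- the adaptive Adversary's choice of environments, as a function of the realized history:
    (Af : ∀ t : Fin T, (Fin t.1 → 𝒜) → Finset 𝒜)
    (Ys : ∀ t : Fin T, (Fin t.1 → 𝒜) → Set (Euc M))
    (L : ∀ t : Fin T, (Fin t.1 → 𝒜) → 𝒜 → Euc M → Fin d → ℝ)
    -- the adaptive Adversary's response `y^t` (it may depend on `x^t`, which is itself
    -- determined by the history, so a function of the history is fully general):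
    (yc : ∀ t : Fin T, (Fin t.1 → 𝒜) → Euc M)
    (hAf : ∀ t h, (Af t h).Nonempty)
    (hYconv : ∀ t h, Convex ℝ (Ys t h)) (hYcomp : ∀ t h, IsCompact (Ys t h))
    (hYne : ∀ t h, (Ys t h).Nonempty)
    (hLcont : ∀ t h a j, ContinuousOn (fun y => L t h a y j) (Ys t h))
    (hLconc : ∀ t h a j, ConcaveOn ℝ (Ys t h) (fun y => L t h a y j))
    (hLbdd : ∀ t h, ∀ a ∈ Af t h, ∀ y ∈ Ys t h, ∀ j, |L t h a y j| ≤ C)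
    (hyc : ∀ t h, yc t h ∈ Ys t h)
    (hT : Real.log d ≤ T)
    (η : ℝ) (hη : η = Real.sqrt (Real.log d / (4 * T * C ^ 2)))
    -- the Learner's mixtures:
    (x : ∀ t : Fin T, (Fin t.1 → 𝒜) → 𝒜 → ℝ)
    (hxmix : ∀ t h, x t h ∈ mixtures (Af t h))
    -- the Learner plays minimax-optimally at every round: writing
    -- `χ^t_j ∝ exp(η Σ_{s<t} ℓ^s_j(a^s,y^s))` for the realized losses along the history,
    -- `x^t` minimizes `max_{y ∈ Y^t} Σ_j χ^t_j E_{a∼x}[ℓ^t_j(a,y)]` over all mixtures: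
    (hmin : ∀ t h, ∀ p ∈ mixtures (Af t h),
      sSup ((fun y => ∑ j : Fin d,
          (Real.exp (η * ∑ s : Fin t.1,
              L ⟨s.1, s.2.trans t.2⟩ (historyPrefix h s) (h s)
                (yc ⟨s.1, s.2.trans t.2⟩ (historyPrefix h s)) j) /
            ∑ i : Fin d, Real.exp (η * ∑ s : Fin t.1,
              L ⟨s.1, s.2.trans t.2⟩ (historyPrefix h s) (h s)
                (yc ⟨s.1, s.2.trans t.2⟩ (historyPrefix h s)) i)) *
          ∑ a, x t h a * L t h a y j) '' Ys t h)
        ≤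
      sSup ((fun y => ∑ j : Fin d,
          (Real.exp (η * ∑ s : Fin t.1,
              L ⟨s.1, s.2.trans t.2⟩ (historyPrefix h s) (h s)
                (yc ⟨s.1, s.2.trans t.2⟩ (historyPrefix h s)) j) /
            ∑ i : Fin d, Real.exp (η * ∑ s : Fin t.1,
              L ⟨s.1, s.2.trans t.2⟩ (historyPrefix h s) (h s)
                (yc ⟨s.1, s.2.trans t.2⟩ (historyPrefix h s)) i)) *
          ∑ a, p a * L t h a y j) '' Ys t h)) :
    -- high-probability AMF regret bound: the probability (over the Learner's realized
    -- outcomes) of the AMF regret exceeding `8C√(T ln(d/δ))` is at most `δ`: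
    ∀ δ ∈ Set.Ioo (0 : ℝ) 1,
      (∑ a : Fin T → 𝒜,
        if 8 * C * Real.sqrt (T * Real.log (d / δ)) <
            (⨆ j : Fin d, ((∑ t, L t (transcriptPrefix a t) (a t)
                  (yc t (transcriptPrefix a t)) j) -
              ∑ t, amfValueProb (Af t (transcriptPrefix a t)) (Ys t (transcriptPrefix a t))
                (L t (transcriptPrefix a t))))
        then (∏ t, x t (transcriptPrefix a t) (a t)) else 0) ≤ δ := by
  intro δ hδ
  haveI : Nonempty (Fin d) := ⟨⟨0, hd⟩⟩
  rcases Nat.eq_zero_or_pos T with hT0 | hTpos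
  · subst hT0
    refine le_trans (le_of_eq (Finset.sum_eq_zero ?_)) hδ.1.le
    intro a _
    have h1 : (⨆ j : Fin d, ((∑ t, L t (transcriptPrefix a t) (a t)
          (yc t (transcriptPrefix a t)) j) -
        ∑ t, amfValueProb (Af t (transcriptPrefix a t)) (Ys t (transcriptPrefix a t))
          (L t (transcriptPrefix a t)))) = 0 := by
      have h2 : ∀ j : Fin d, ((∑ t, L t (transcriptPrefix a t) (a t)
            (yc t (transcriptPrefix a t)) j) -
          ∑ t, amfValueProb (Af t (transcriptPrefix a t)) (Ys t (transcriptPrefix a t))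
            (L t (transcriptPrefix a t))) = 0 := by
        intro j
        simp
      calc (⨆ j : Fin d, ((∑ t, L t (transcriptPrefix a t) (a t)
              (yc t (transcriptPrefix a t)) j) -
            ∑ t, amfValueProb (Af t (transcriptPrefix a t)) (Ys t (transcriptPrefix a t))
              (L t (transcriptPrefix a t))))
          = ⨆ _ : Fin d, (0:ℝ) := by rw [funext h2]
        _ = 0 := ciSup_const
    rw [if_neg]
    rw [h1, not_lt]
    positivity
  · have hround : ∀ (t : Fin T) (h : Fin t.1 → 𝒜), ∑ j : Fin d,
        (Real.exp (η * ∑ s : Fin t.1,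
            L ⟨s.1, s.2.trans t.2⟩ (historyPrefix h s) (h s)
              (yc ⟨s.1, s.2.trans t.2⟩ (historyPrefix h s)) j) /
          ∑ i : Fin d, Real.exp (η * ∑ s : Fin t.1,
            L ⟨s.1, s.2.trans t.2⟩ (historyPrefix h s) (h s)
              (yc ⟨s.1, s.2.trans t.2⟩ (historyPrefix h s)) i)) *
        (∑ b, x t h b * L t h b (yc t h) j)
        ≤ amfValueProb (Af t h) (Ys t h) (L t h) := by
      intro t h
      have hDpos : (0:ℝ) < ∑ i : Fin d, Real.exp (η * ∑ s : Fin t.1,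
          L ⟨s.1, s.2.trans t.2⟩ (historyPrefix h s) (h s)
            (yc ⟨s.1, s.2.trans t.2⟩ (historyPrefix h s)) i) :=
        Finset.sum_pos (fun i _ => Real.exp_pos _) Finset.univ_nonempty
      have hχ0 : ∀ j : Fin d, 0 ≤ Real.exp (η * ∑ s : Fin t.1,
          L ⟨s.1, s.2.trans t.2⟩ (historyPrefix h s) (h s)
            (yc ⟨s.1, s.2.trans t.2⟩ (historyPrefix h s)) j) /
          ∑ i : Fin d, Real.exp (η * ∑ s : Fin t.1,
            L ⟨s.1, s.2.trans t.2⟩ (historyPrefix h s) (h s)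
              (yc ⟨s.1, s.2.trans t.2⟩ (historyPrefix h s)) i) :=
        fun j => div_nonneg (Real.exp_nonneg _) hDpos.le
      have hχ1 : ∑ j : Fin d, Real.exp (η * ∑ s : Fin t.1,
          L ⟨s.1, s.2.trans t.2⟩ (historyPrefix h s) (h s)
            (yc ⟨s.1, s.2.trans t.2⟩ (historyPrefix h s)) j) /
          ∑ i : Fin d, Real.exp (η * ∑ s : Fin t.1,
            L ⟨s.1, s.2.trans t.2⟩ (historyPrefix h s) (h s)
              (yc ⟨s.1, s.2.trans t.2⟩ (historyPrefix h s)) i) = 1 := by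
        rw [← Finset.sum_div, div_self (ne_of_gt hDpos)]
      apply le_of_forall_pos_le_add
      intro ε hε
      obtain ⟨p, hp, hpbound⟩ := exists_good_mixture hd (Af t h) (hAf t h) (Ys t h)
        (hYconv t h) (hYne t h) (L t h) C (hLbdd t h) (fun a j => hLconc t h a j)
        _ hχ0 hχ1 hε
      have h1 : ∑ j : Fin d,
          (Real.exp (η * ∑ s : Fin t.1,
              L ⟨s.1, s.2.trans t.2⟩ (historyPrefix h s) (h s)
                (yc ⟨s.1, s.2.trans t.2⟩ (historyPrefix h s)) j) /
            ∑ i : Fin d, Real.exp (η * ∑ s : Fin t.1,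
              L ⟨s.1, s.2.trans t.2⟩ (historyPrefix h s) (h s)
                (yc ⟨s.1, s.2.trans t.2⟩ (historyPrefix h s)) i)) *
          (∑ b, x t h b * L t h b (yc t h) j)
          ≤ sSup ((fun y => ∑ j : Fin d,
          (Real.exp (η * ∑ s : Fin t.1,
              L ⟨s.1, s.2.trans t.2⟩ (historyPrefix h s) (h s)
                (yc ⟨s.1, s.2.trans t.2⟩ (historyPrefix h s)) j) /
            ∑ i : Fin d, Real.exp (η * ∑ s : Fin t.1,
              L ⟨s.1, s.2.trans t.2⟩ (historyPrefix h s) (h s)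
                (yc ⟨s.1, s.2.trans t.2⟩ (historyPrefix h s)) i)) *
          ∑ a, x t h a * L t h a y j) '' Ys t h) := by
        apply le_csSup
        · refine ⟨C, ?_⟩
          rintro z ⟨y, hy, rfl⟩
          calc ∑ j : Fin d, _ ≤ ∑ j : Fin d,
              (Real.exp (η * ∑ s : Fin t.1,
                  L ⟨s.1, s.2.trans t.2⟩ (historyPrefix h s) (h s)
                    (yc ⟨s.1, s.2.trans t.2⟩ (historyPrefix h s)) j) /
                ∑ i : Fin d, Real.exp (η * ∑ s : Fin t.1,
                  L ⟨s.1, s.2.trans t.2⟩ (historyPrefix h s) (h s)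
                    (yc ⟨s.1, s.2.trans t.2⟩ (historyPrefix h s)) i)) * C := by
                apply Finset.sum_le_sum
                intro j _
                exact mul_le_mul_of_nonneg_left
                  (le_of_abs_le (mixture_abs_le (hxmix t h)
                    (fun b hb => hLbdd t h b hb y hy j))) (hχ0 j)
            _ = C := by rw [← Finset.sum_mul, hχ1, one_mul]
        · exact ⟨yc t h, hyc t h, rfl⟩
      have h2 := hmin t h p hp
      have h3 : sSup ((fun y => ∑ j : Fin d,
          (Real.exp (η * ∑ s : Fin t.1,
              L ⟨s.1, s.2.trans t.2⟩ (historyPrefix h s) (h s)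
                (yc ⟨s.1, s.2.trans t.2⟩ (historyPrefix h s)) j) /
            ∑ i : Fin d, Real.exp (η * ∑ s : Fin t.1,
              L ⟨s.1, s.2.trans t.2⟩ (historyPrefix h s) (h s)
                (yc ⟨s.1, s.2.trans t.2⟩ (historyPrefix h s)) i)) *
          ∑ a, p a * L t h a y j) '' Ys t h)
          ≤ amfValueProb (Af t h) (Ys t h) (L t h) + ε := by
        apply csSup_le ((hYne t h).image _)
        rintro z ⟨y, hy, rfl⟩
        exact hpbound y hy
      exact h1.trans (h2.trans h3)
    exact amf_core T d hd C η hC hTpos hT hη Af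
      (fun t h b j => L t h b (yc t h) j)
      (fun t h => amfValueProb (Af t h) (Ys t h) (L t h)) x hxmix
      (fun t h b hb j => hLbdd t h b hb (yc t h) (hyc t h) j) hround δ hδ


end
end
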